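/- arXiv:2401.07840 — 9 statements merged into one kernel-verified Lean document; each statement's English description precedes it below -/
import Mathlib

section
/- For every natural number n, the sum over all pairs (i,j) of natural numbers with i+j=n of (2i choose i)·(2j choose j) equals 4^n. -/
open Finset Nat

private lemma cb_sym (n : ℕ) (g : ℕ × ℕ → ℕ) :
    ∑ p ∈ Finset.HasAntidiagonal.antidiagonal n, g p = ∑ p ∈ Finset.HasAntidiagonal.antidiagonal n, g p.swap := by
  conv_lhs => rw [← Finset.HasAntidiagonal.map_swap_antidiagonal]
  rw [Finset.sum_map]
  simp

private lemma key (n : ℕ) :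
    2 * ∑ p ∈ Finset.HasAntidiagonal.antidiagonal n, p.1 * (Nat.centralBinom p.1 * Nat.centralBinom p.2)
      = n * ∑ p ∈ Finset.HasAntidiagonal.antidiagonal n, Nat.centralBinom p.1 * Nat.centralBinom p.2 := by
  rw [two_mul]
  nth_rewrite 2 [cb_sym n (fun p => p.1 * (Nat.centralBinom p.1 * Nat.centralBinom p.2))]
  simp only [Prod.fst_swap, Prod.snd_swap, Prod.swap]
  rw [Finset.mul_sum, ← Finset.sum_add_distrib]
  apply Finset.sum_congr rfl
  intro p hp
  have h := Finset.HasAntidiagonal.mem_antidiagonal.mp hp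
  rw [mul_comm (Nat.centralBinom p.2)]
  rw [← h]
  ring

theorem sum_central_binom (n : ℕ) :
    ∑ p ∈ Finset.HasAntidiagonal.antidiagonal n,
      ((2 * p.1).choose p.1) * ((2 * p.2).choose p.2) = 4 ^ n := by
  have main : ∀ m : ℕ, ∑ p ∈ Finset.HasAntidiagonal.antidiagonal m,
      Nat.centralBinom p.1 * Nat.centralBinom p.2 = 4 ^ m := by
    intro m
    induction m with
    | zero => simp [Nat.centralBinom]
    | succ n ih =>
      have hmul : (n + 1) * ∑ p ∈ Finset.HasAntidiagonal.antidiagonal (n + 1),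
          Nat.centralBinom p.1 * Nat.centralBinom p.2 = (n + 1) * 4 ^ (n + 1) := by
        have h1 : (n + 1) * ∑ p ∈ Finset.HasAntidiagonal.antidiagonal (n + 1),
            Nat.centralBinom p.1 * Nat.centralBinom p.2
            = 2 * ∑ p ∈ Finset.HasAntidiagonal.antidiagonal (n + 1),
                p.1 * (Nat.centralBinom p.1 * Nat.centralBinom p.2) := by
          rw [key (n + 1)]
        have h2 : ∑ p ∈ Finset.HasAntidiagonal.antidiagonal (n + 1),
            p.1 * (Nat.centralBinom p.1 * Nat.centralBinom p.2)
            = ∑ p ∈ Finset.HasAntidiagonal.antidiagonal n,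
                2 * (2 * p.1 + 1) * (Nat.centralBinom p.1 * Nat.centralBinom p.2) := by
          rw [Finset.Nat.sum_antidiagonal_succ
            (f := fun p => p.1 * (Nat.centralBinom p.1 * Nat.centralBinom p.2))]
          simp only [zero_mul, zero_add]
          apply Finset.sum_congr rfl
          intro p _
          rw [← mul_assoc, Nat.succ_mul_centralBinom_succ, mul_assoc]
        have h3 : ∑ p ∈ Finset.HasAntidiagonal.antidiagonal n,
            2 * (2 * p.1 + 1) * (Nat.centralBinom p.1 * Nat.centralBinom p.2)
            = 4 * (∑ p ∈ Finset.HasAntidiagonal.antidiagonal n,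
                p.1 * (Nat.centralBinom p.1 * Nat.centralBinom p.2))
              + 2 * ∑ p ∈ Finset.HasAntidiagonal.antidiagonal n,
                  Nat.centralBinom p.1 * Nat.centralBinom p.2 := by
          rw [Finset.mul_sum, Finset.mul_sum, ← Finset.sum_add_distrib]
          apply Finset.sum_congr rfl
          intro p _
          ring
        have hk := key n
        rw [h1, h2, h3, ih]
        have : 2 * (4 * ∑ p ∈ Finset.HasAntidiagonal.antidiagonal n,
            p.1 * (Nat.centralBinom p.1 * Nat.centralBinom p.2) + 2 * 4 ^ n)
            = 4 * (2 * ∑ p ∈ Finset.HasAntidiagonal.antidiagonal n,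
                p.1 * (Nat.centralBinom p.1 * Nat.centralBinom p.2)) + 4 * 4 ^ n := by ring
        rw [this, hk, ih]
        ring
      exact Nat.eq_of_mul_eq_mul_left (Nat.succ_pos n) hmul
  simpa [Nat.centralBinom] using main n
end

section
/- As formal power series over the rationals, the square of the generating function ∑_{n≥0} (2n choose n) x^n equals 1/(1-4x). -/
open PowerSeries Finset

private def c (n : ℕ) : ℚ := ((2 * n).choose n : ℚ)

private lemma c_succ (k : ℕ) : ((k : ℚ) + 1) * c (k + 1) = 2 * (2 * k + 1) * c k := by
  have h := Nat.succ_mul_centralBinom_succ k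
  simp only [Nat.centralBinom] at h
  have : ((k + 1) * (2 * (k + 1)).choose (k + 1) : ℚ)
      = (2 * (2 * k + 1) * (2 * k).choose k : ℚ) := by exact_mod_cast congrArg (Nat.cast : ℕ → ℚ) h
  unfold c
  push_cast at this ⊢
  linarith [this]

private lemma refl_sum (n : ℕ) :
    2 * ∑ k ∈ range (n + 1), (k : ℚ) * (c k * c (n - k))
      = n * ∑ k ∈ range (n + 1), c k * c (n - k) := by
  have h : ∑ k ∈ range (n + 1), (k : ℚ) * (c k * c (n - k))
      = ∑ k ∈ range (n + 1), ((n - k : ℕ) : ℚ) * (c k * c (n - k)) := by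
    rw [← Finset.sum_range_reflect]
    apply Finset.sum_congr rfl
    intro k hk
    have hk' : k ≤ n := Nat.lt_succ_iff.mp (Finset.mem_range.mp hk)
    simp only [Nat.add_sub_cancel]
    rw [Nat.sub_sub_self hk']
    ring
  rw [two_mul]
  nth_rewrite 2 [h]
  rw [← Finset.sum_add_distrib, Finset.mul_sum]
  apply Finset.sum_congr rfl
  intro k hk
  have hk' : k ≤ n := Nat.lt_succ_iff.mp (Finset.mem_range.mp hk)
  have : ((n - k : ℕ) : ℚ) = (n : ℚ) - k := by
    push_cast [Nat.cast_sub hk']; ring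
  rw [this]; ring

private lemma conv_sum (n : ℕ) :
    ∑ k ∈ range (n + 1), c k * c (n - k) = 4 ^ n := by
  induction n with
  | zero => simp [c]
  | succ n ih =>
    have hne : ((n : ℚ) + 1) ≠ 0 := by positivity
    apply mul_left_cancel₀ hne
    -- LHS: (n+1) * S(n+1) = 2 * A where A = ∑ k * c k * c (n+1-k)
    have hsym : ∑ k ∈ range (n + 2), ((n : ℚ) + 1) * (c k * c (n + 1 - k))
        = 2 * ∑ k ∈ range (n + 2), (k : ℚ) * (c k * c (n + 1 - k)) := by
      have := refl_sum (n + 1)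
      have hcast : ((n + 1 : ℕ) : ℚ) = (n : ℚ) + 1 := by push_cast; ring
      rw [hcast] at this
      rw [← Finset.mul_sum, ← this]
    have hA : ∑ k ∈ range (n + 2), (k : ℚ) * (c k * c (n + 1 - k))
        = 2 * ((n : ℚ) + 1) * ∑ k ∈ range (n + 1), c k * c (n - k) := by
      rw [Finset.sum_range_succ'] -- split off k = 0
      simp only [Nat.cast_zero, zero_mul, add_zero]
      have step : ∀ k ∈ range (n + 1),
          ((k + 1 : ℕ) : ℚ) * (c (k + 1) * c (n + 1 - (k + 1)))
            = 2 * (2 * k + 1) * (c k * c (n - k)) := by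
        intro k hk
        have h1 : n + 1 - (k + 1) = n - k := by omega
        have h2 := c_succ k
        rw [h1]
        push_cast
        calc ((k : ℚ) + 1) * (c (k + 1) * c (n - k))
            = (((k : ℚ) + 1) * c (k + 1)) * c (n - k) := by ring
          _ = (2 * (2 * k + 1) * c k) * c (n - k) := by rw [h2]
          _ = 2 * (2 * (k : ℚ) + 1) * (c k * c (n - k)) := by ring
      rw [Finset.sum_congr rfl step]
      have expand : ∑ k ∈ range (n + 1), 2 * (2 * (k : ℚ) + 1) * (c k * c (n - k))
          = 4 * ∑ k ∈ range (n + 1), (k : ℚ) * (c k * c (n - k))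
            + 2 * ∑ k ∈ range (n + 1), c k * c (n - k) := by
        rw [Finset.mul_sum, Finset.mul_sum, ← Finset.sum_add_distrib]
        apply Finset.sum_congr rfl; intro k _; ring
      rw [expand]
      have := refl_sum n
      nlinarith [this]
    calc ((n : ℚ) + 1) * ∑ k ∈ range (n + 2), c k * c (n + 1 - k)
        = ∑ k ∈ range (n + 2), ((n : ℚ) + 1) * (c k * c (n + 1 - k)) := by
          rw [Finset.mul_sum]
      _ = 2 * ∑ k ∈ range (n + 2), (k : ℚ) * (c k * c (n + 1 - k)) := hsym
      _ = 2 * (2 * ((n : ℚ) + 1) * ∑ k ∈ range (n + 1), c k * c (n - k)) := by rw [hA]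
      _ = 4 * ((n : ℚ) + 1) * 4 ^ n := by rw [ih]; ring
      _ = ((n : ℚ) + 1) * 4 ^ (n + 1) := by ring

theorem central_binom_gf_sq :
    (PowerSeries.mk fun n => ((2 * n).choose n : ℚ)) ^ 2
      = (1 - 4 * PowerSeries.X : PowerSeries ℚ)⁻¹ := by
  have hc : constantCoeff (1 - 4 * X : ℚ⟦X⟧) ≠ 0 := by
    simp
  rw [PowerSeries.eq_inv_iff_mul_eq_one hc]
  have hsq : (PowerSeries.mk fun n => ((2 * n).choose n : ℚ)) ^ 2
      = PowerSeries.mk fun n => (4 : ℚ) ^ n := by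
    ext n
    rw [sq, PowerSeries.coeff_mul, PowerSeries.coeff_mk,
      Finset.Nat.sum_antidiagonal_eq_sum_range_succ_mk]
    simpa [c] using conv_sum n
  rw [hsq]
  ext n
  rw [mul_sub, mul_one]
  have hX : (PowerSeries.mk fun n => (4 : ℚ) ^ n) * (4 * X)
      = PowerSeries.C (4 : ℚ) * ((PowerSeries.mk fun n => (4 : ℚ) ^ n) * X) := by
    have h4 : (4 : ℚ⟦X⟧) = PowerSeries.C (4 : ℚ) := by
      rw [map_ofNat]
    rw [h4]
    ring
  rw [hX]
  cases n with
  | zero => simp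
  | succ n =>
    rw [map_sub, PowerSeries.coeff_mk, PowerSeries.coeff_C_mul,
      PowerSeries.coeff_succ_mul_X, PowerSeries.coeff_mk]
    simp [pow_succ]
    ring
end

section
/- As formal power series over ℚ, the generating function C(x) = ∑_{n≥0} C_n x^n of the Catalan numbers satisfies (1 + (4x - 1)·f(x)) = 2x·C(x), where f(x) = ∑_{n≥0} (2n choose n) x^n. -/
open PowerSeries

theorem catalan_gf_eq :
    let f : PowerSeries ℚ := PowerSeries.mk fun n => ((2 * n).choose n : ℚ)
    let c : PowerSeries ℚ := PowerSeries.mk fun n => (1 / (n + 1 : ℚ)) * ((2 * n).choose n : ℚ)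
    1 + (4 * PowerSeries.X - 1) * f = 2 * PowerSeries.X * c := by
  intro f c
  have h4 : (4 : ℚ⟦X⟧) = C (4 : ℚ) := by simp [map_ofNat]
  have h2' : (2 : ℚ⟦X⟧) = C (2 : ℚ) := by simp [map_ofNat]
  have key : 1 + (4 * (X * f) - f) = 2 * (X * c) := by
    ext n
    cases n with
    | zero =>
      simp [f, c, coeff_zero_eq_constantCoeff]
    | succ m =>
      rw [map_add, map_sub, h4, h2', coeff_C_mul, coeff_C_mul]
      rw [coeff_succ_X_mul, coeff_succ_X_mul]
      simp only [f, c, coeff_mk, PowerSeries.coeff_one, Nat.succ_ne_zero, if_false]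
      have h2 : ((m+1 : ℕ) : ℚ) * ((2*(m+1)).choose (m+1) : ℚ) = 2 * (2*m+1) * ((2*m).choose m : ℚ) := by
        exact_mod_cast Nat.succ_mul_centralBinom_succ m
      have hm : ((m:ℚ)+1) ≠ 0 := by positivity
      push_cast at h2 ⊢
      field_simp
      nlinarith [h2]
  calc 1 + (4 * X - 1) * f = 1 + (4 * (X * f) - f) := by ring
    _ = 2 * (X * c) := key
    _ = 2 * X * c := by ring
end

section
/- The generating function of the central Delannoy numbers D_n = ∑_{d=0}^n (n+d choose n-d)(2d choose d) satisfies (∑_{n≥0} D_n x^n)² · (1 - 6x + x²) = 1 as formal power series over ℚ. -/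
open PowerSeries Finset
open scoped Nat

noncomputable section DelannoyAux

/-- Central Delannoy numbers as rationals. -/
def Dl (n : ℕ) : ℚ := ∑ d ∈ Finset.range (n + 1), (n.choose d : ℚ) * ((n + d).choose d : ℚ)

/-- WZ certificate. -/
def Hw (m k : ℕ) : ℚ := 2 * (2 * (m : ℚ) + 3) * k * ((m + 2).choose k : ℚ) * ((m + k).choose (k - 1) : ℚ)

lemma term_eq (n d : ℕ) (h : d ≤ n) :
    ((n + d).choose (n - d) : ℚ) * ((2 * d).choose d : ℚ)
      = (n.choose d : ℚ) * ((n + d).choose d : ℚ) := by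
  have h1 : (n + d).choose (n - d) = (n + d).choose (2 * d) := by
    rw [show n - d = (n + d) - 2 * d by omega]
    exact Nat.choose_symm (by omega)
  have h2 : (n + d).choose (2 * d) * (2 * d).choose d
      = (n + d).choose d * ((n + d) - d).choose (2 * d - d) := by
    exact Nat.choose_mul (by omega)
  rw [show (n + d) - d = n by omega, show 2 * d - d = d by omega] at h2
  rw [h1, ← Nat.cast_mul, h2]
  push_cast
  ring

/-- Cast of a binomial coefficient as a quotient of factorials. -/
lemma cc (n k d : ℕ) (h : n = k + d) : (n.choose k : ℚ) = (n ! : ℚ) / ((k ! : ℚ) * (d ! : ℚ)) := by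
  subst h
  rw [Nat.cast_choose ℚ (Nat.le_add_right k d), Nat.add_sub_cancel_left]

/-- Unfold one step of a factorial, with a flexible successor form. -/
lemma ff (n s : ℕ) (h : n = s + 1) : (n ! : ℚ) = (n : ℚ) * (s ! : ℚ) := by
  subst h
  push_cast [Nat.factorial_succ]
  ring

/-- Renormalise the argument of a factorial. -/
lemma feq (n s : ℕ) (h : n = s) : (n ! : ℚ) = (s ! : ℚ) := by rw [h]

lemma key_s13 (m k : ℕ) :
    ((m : ℚ) + 2) ^ 2 * ((m + 2).choose k : ℚ) * ((m + 2 + k).choose k : ℚ)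
      - 3 * ((m : ℚ) + 2) * (2 * m + 3) * ((m + 1).choose k : ℚ) * ((m + 1 + k).choose k : ℚ)
      + ((m : ℚ) + 1) * ((m : ℚ) + 2) * (m.choose k : ℚ) * ((m + k).choose k : ℚ)
    = Hw m k - Hw m (k + 1) := by
  have fne : ∀ t : ℕ, (t ! : ℚ) ≠ 0 := fun t => Nat.cast_ne_zero.mpr (Nat.factorial_ne_zero t)
  rcases k with _ | j
  · simp only [Hw, Nat.choose_zero_right, Nat.add_zero, Nat.choose_one_right,
      Nat.cast_zero, Nat.cast_one, Nat.add_sub_cancel]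
    push_cast [Nat.choose_one_right]
    ring
  rcases Nat.lt_or_ge (m + 2) (j + 1) with hD | hin
  · have z1 : (m + 2).choose (j + 1) = 0 := Nat.choose_eq_zero_of_lt (by omega)
    have z2 : (m + 1).choose (j + 1) = 0 := Nat.choose_eq_zero_of_lt (by omega)
    have z3 : m.choose (j + 1) = 0 := Nat.choose_eq_zero_of_lt (by omega)
    have z4 : (m + 2).choose (j + 1 + 1) = 0 := Nat.choose_eq_zero_of_lt (by omega)
    simp [Hw, z1, z2, z3, z4]
  rcases Nat.lt_or_ge m (j + 1) with hB | hA
  · rcases Nat.eq_or_lt_of_le hin with hC | hlt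
    · -- k = m + 2
      obtain rfl : j = m + 1 := by omega
      rw [show m + 1 + 1 = m + 2 by omega]
      have z2 : (m + 1).choose (m + 2) = 0 := Nat.choose_eq_zero_of_lt (by omega)
      have z3 : m.choose (m + 2) = 0 := Nat.choose_eq_zero_of_lt (by omega)
      have z4 : (m + 2).choose (m + 2 + 1) = 0 := Nat.choose_eq_zero_of_lt (by omega)
      simp only [Hw, z2, z3, z4, Nat.cast_zero, mul_zero, zero_mul, sub_zero, add_zero,
        Nat.add_sub_cancel, Nat.choose_self]
      rw [show m + 2 - 1 = m + 1 by omega]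
      rw [cc (m + 2 + (m + 2)) (m + 2) (m + 2) (by omega),
        cc (m + (m + 2)) (m + 1) (m + 1) (by omega),
        ff (m + 2 + (m + 2)) (2 * m + 3) (by omega),
        ff (2 * m + 3) (2 * m + 2) (by omega),
        feq (m + (m + 2)) (2 * m + 2) (by omega),
        ff (m + 2) (m + 1) (by omega)]
      have h1 : ((m : ℚ) + 1) ≠ 0 := by positivity
      have h2 : ((m : ℚ) + 2) ≠ 0 := by positivity
      push_cast
      field_simp
      ring
    · -- k = m + 1
      have hj : m = j := by omega
      subst hj
      have z3 : m.choose (m + 1) = 0 := Nat.choose_eq_zero_of_lt (by omega)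
      simp only [Hw, z3, Nat.cast_zero, mul_zero, zero_mul, add_zero,
        Nat.add_sub_cancel, Nat.choose_self]
      rw [cc (m + 2) (m + 1) 1 (by omega),
        cc (m + 2 + (m + 1)) (m + 1) (m + 2) (by omega),
        cc (m + 1 + (m + 1)) (m + 1) (m + 1) (by omega),
        cc (m + (m + 1)) m (m + 1) (by omega),
        cc (m + (m + 1 + 1)) (m + 1) (m + 1) (by omega),
        feq (m + 2 + (m + 1)) (2 * m + 3) (by omega),
        feq (m + 1 + (m + 1)) (2 * m + 2) (by omega),
        feq (m + (m + 1)) (2 * m + 1) (by omega),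
        feq (m + (m + 1 + 1)) (2 * m + 2) (by omega),
        ff (2 * m + 3) (2 * m + 2) (by omega),
        ff (2 * m + 2) (2 * m + 1) (by omega),
        ff (m + 2) (m + 1) (by omega),
        ff (m + 1) m (by omega)]
      have h1 : ((m : ℚ) + 1) ≠ 0 := by positivity
      have h2 : ((m : ℚ) + 2) ≠ 0 := by positivity
      have h3 : (2 * (m : ℚ) + 1) ≠ 0 := by positivity
      have h4 : (2 * (m : ℚ) + 2) ≠ 0 := by positivity
      have h5 : (2 * (m : ℚ) + 3) ≠ 0 := by positivity
      simp only [Nat.factorial_zero, Nat.factorial_one, Nat.cast_one]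
      push_cast
      field_simp
      ring
  · -- generic case k = j + 1 ≤ m
    obtain ⟨a, rfl⟩ : ∃ a, m = j + 1 + a := ⟨m - (j + 1), by omega⟩
    simp only [Hw, Nat.add_sub_cancel]
    rw [cc (j + 1 + a + 2) (j + 1) (a + 2) (by omega),
      cc (j + 1 + a + 2 + (j + 1)) (j + 1) (j + a + 3) (by omega),
      cc (j + 1 + a + 1) (j + 1) (a + 1) (by omega),
      cc (j + 1 + a + 1 + (j + 1)) (j + 1) (j + a + 2) (by omega),
      cc (j + 1 + a) (j + 1) a (by omega),
      cc (j + 1 + a + (j + 1)) (j + 1) (j + a + 1) (by omega),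
      cc (j + 1 + a + (j + 1)) j (j + a + 2) (by omega),
      cc (j + 1 + a + 2) (j + 1 + 1) (a + 1) (by omega),
      cc (j + 1 + a + (j + 1 + 1)) (j + 1) (j + a + 2) (by omega),
      feq (j + 1 + a + 2) (j + a + 3) (by omega),
      feq (j + 1 + a + 2 + (j + 1)) (2 * j + a + 4) (by omega),
      feq (j + 1 + a + 1) (j + a + 2) (by omega),
      feq (j + 1 + a + 1 + (j + 1)) (2 * j + a + 3) (by omega),
      feq (j + 1 + a) (j + a + 1) (by omega),
      feq (j + 1 + a + (j + 1)) (2 * j + a + 2) (by omega),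
      feq (j + 1 + a + (j + 1 + 1)) (2 * j + a + 3) (by omega),
      ff (2 * j + a + 4) (2 * j + a + 3) (by omega),
      ff (2 * j + a + 3) (2 * j + a + 2) (by omega),
      ff (j + a + 3) (j + a + 2) (by omega),
      ff (j + a + 2) (j + a + 1) (by omega),
      ff (j + 1 + 1) (j + 1) (by omega),
      ff (j + 1) j (by omega),
      ff (a + 2) (a + 1) (by omega),
      ff (a + 1) a (by omega)]
    have h1 : ((j : ℚ) + 1) ≠ 0 := by positivity
    have h2 : ((j : ℚ) + 2) ≠ 0 := by positivity
    have h3 : ((a : ℚ) + 1) ≠ 0 := by positivity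
    have h4 : ((a : ℚ) + 2) ≠ 0 := by positivity
    have h5 : ((j : ℚ) + (a : ℚ) + 1) ≠ 0 := by positivity
    have h6 : ((j : ℚ) + (a : ℚ) + 2) ≠ 0 := by positivity
    have h7 : ((j : ℚ) + (a : ℚ) + 3) ≠ 0 := by positivity
    have h8 : (2 * (j : ℚ) + (a : ℚ) + 3) ≠ 0 := by positivity
    have h9 : (2 * (j : ℚ) + (a : ℚ) + 4) ≠ 0 := by positivity
    push_cast
    field_simp
    ring

lemma Dl_ext (n N : ℕ) (h : n + 1 ≤ N) :
    Dl n = ∑ d ∈ Finset.range N, (n.choose d : ℚ) * ((n + d).choose d : ℚ) := by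
  rw [Dl]
  apply Finset.sum_subset (Finset.range_subset_range.mpr h)
  intro x _ hx
  have : n < x := by simpa using hx
  simp [Nat.choose_eq_zero_of_lt this]

lemma Dl_rec (m : ℕ) :
    ((m : ℚ) + 2) * Dl (m + 2) = 3 * (2 * (m : ℚ) + 3) * Dl (m + 1) - ((m : ℚ) + 1) * Dl m := by
  have h2 : ((m : ℚ) + 2) ≠ 0 := by positivity
  apply mul_left_cancel₀ h2
  rw [Dl_ext (m + 2) (m + 4) (by omega), Dl_ext (m + 1) (m + 4) (by omega),
    Dl_ext m (m + 4) (by omega)]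
  have tele : ∑ k ∈ Finset.range (m + 4), (Hw m k - Hw m (k + 1)) = Hw m 0 - Hw m (m + 4) :=
    Finset.sum_range_sub' (Hw m) (m + 4)
  have h0 : Hw m 0 = 0 := by simp [Hw]
  have h4 : Hw m (m + 4) = 0 := by
    have : (m + 2).choose (m + 4) = 0 := Nat.choose_eq_zero_of_lt (by omega)
    simp [Hw, this]
  have sum_eq : ∑ k ∈ Finset.range (m + 4),
      (((m : ℚ) + 2) ^ 2 * (((m + 2).choose k : ℚ) * ((m + 2 + k).choose k : ℚ))
        - 3 * ((m : ℚ) + 2) * (2 * m + 3) * (((m + 1).choose k : ℚ) * ((m + 1 + k).choose k : ℚ))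
        + ((m : ℚ) + 1) * ((m : ℚ) + 2) * ((m.choose k : ℚ) * ((m + k).choose k : ℚ))) = 0 := by
    have step := Finset.sum_congr (rfl : Finset.range (m + 4) = _)
      (fun k (_ : k ∈ Finset.range (m + 4)) => by linear_combination key_s13 m k :
        ∀ k ∈ Finset.range (m + 4),
          (((m : ℚ) + 2) ^ 2 * (((m + 2).choose k : ℚ) * ((m + 2 + k).choose k : ℚ))
            - 3 * ((m : ℚ) + 2) * (2 * m + 3) * (((m + 1).choose k : ℚ) * ((m + 1 + k).choose k : ℚ))
            + ((m : ℚ) + 1) * ((m : ℚ) + 2) * ((m.choose k : ℚ) * ((m + k).choose k : ℚ)))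
          = Hw m k - Hw m (k + 1))
    rw [step, tele, h0, h4, sub_zero]
  simp only [Finset.sum_add_distrib, Finset.sum_sub_distrib, ← Finset.mul_sum] at sum_eq
  linear_combination sum_eq

end DelannoyAux

theorem delannoy_gf_sq :
    (PowerSeries.mk fun n =>
        ∑ d ∈ Finset.range (n + 1), ((n + d).choose (n - d) : ℚ) * ((2 * d).choose d : ℚ)) ^ 2 *
      (1 - 6 * PowerSeries.X + PowerSeries.X ^ 2) = 1 := by
  have hmk : (PowerSeries.mk fun n =>
      ∑ d ∈ Finset.range (n + 1), ((n + d).choose (n - d) : ℚ) * ((2 * d).choose d : ℚ))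
      = PowerSeries.mk Dl := by
    ext n
    rw [coeff_mk, coeff_mk, Dl]
    exact Finset.sum_congr rfl fun d hd => term_eq n d (Nat.lt_succ_iff.mp (Finset.mem_range.mp hd))
  rw [hmk]
  set F : ℚ⟦X⟧ := PowerSeries.mk Dl with hF
  set P : ℚ⟦X⟧ := 1 - 6 * X + X ^ 2 with hP
  have hC6 : (6 : ℚ⟦X⟧) = C 6 := (map_ofNat (C (R := ℚ)) 6).symm
  have hC3 : (3 : ℚ⟦X⟧) = C 3 := (map_ofNat (C (R := ℚ)) 3).symm
  have hD0 : Dl 0 = 1 := by simp [Dl]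
  have hD1 : Dl 1 = 3 := by norm_num [Dl, Finset.sum_range_succ]
  have hcoeff : ∀ n, coeff n F = Dl n := fun n => coeff_mk n Dl
  have hcoeffd : ∀ n, coeff n (d⁄dX ℚ F) = Dl (n + 1) * (n + 1) := by
    intro n; rw [coeff_derivative, hcoeff]
  have ode : P * d⁄dX ℚ F = (3 - X) * F := by
    have expand : ∀ g : ℚ⟦X⟧, P * g = g - C 6 * (X * g) + X ^ 2 * g := by
      intro g; rw [hP, ← hC6]; ring
    ext n
    rw [expand, show (3 - X) * F = C 3 * F - X * F by rw [← hC3]; ring]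
    rcases n with _ | n
    · simp only [map_add, map_sub, coeff_C_mul, coeff_zero_X_mul,
        PowerSeries.coeff_X_pow_mul', hcoeffd, hcoeff]
      norm_num [hD0, hD1]
    · rcases n with _ | n
      · have hx2 : coeff 1 (X ^ 2 * d⁄dX ℚ F) = 0 := by
          rw [PowerSeries.coeff_X_pow_mul']; norm_num
        simp only [map_add, map_sub, coeff_C_mul, coeff_succ_X_mul, hcoeffd, hx2, hcoeff]
        have h := Dl_rec 0
        push_cast at h ⊢
        linarith [h]
      · have hx2 : coeff (n + 2) (X ^ 2 * d⁄dX ℚ F) = coeff n (d⁄dX ℚ F) := by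
          rw [PowerSeries.coeff_X_pow_mul']
          norm_num
        simp only [map_add, map_sub, coeff_C_mul, coeff_succ_X_mul, hcoeffd, hx2, hcoeff]
        have h := Dl_rec (n + 1)
        push_cast at h ⊢
        linarith [h]
  have hd6 : d⁄dX ℚ (6 : ℚ⟦X⟧) = 0 := by rw [hC6, derivative_C]
  have hdP : d⁄dX ℚ P = 2 * X - 6 := by
    rw [hP, map_add, map_sub, Derivation.map_one_eq_zero, Derivation.leibniz,
      Derivation.leibniz_pow, hd6, derivative_X]
    simp only [smul_eq_mul, nsmul_eq_mul, pow_one, mul_one, mul_zero, add_zero, Nat.cast_ofNat]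
    ring
  have hdg : d⁄dX ℚ (F ^ 2 * P) = 0 := by
    have h1 : d⁄dX ℚ (F ^ 2) = 2 * F * d⁄dX ℚ F := by
      rw [pow_two, Derivation.leibniz]
      simp only [smul_eq_mul]
      ring
    rw [Derivation.leibniz, hdP, h1]
    simp only [smul_eq_mul]
    linear_combination (2 * F) * ode
  have hconst : constantCoeff (F ^ 2 * P) = constantCoeff 1 := by
    rw [hP]
    rw [map_mul, map_pow, map_add, map_sub, map_mul, map_one, map_pow, constantCoeff_X]
    rw [show constantCoeff F = Dl 0 from constantCoeff_mk, hD0]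
    norm_num
  exact derivative.ext (by rw [hdg, Derivation.map_one_eq_zero]) hconst
end

section
/- The generating function S(x) of the large Schröder numbers S_n = ∑_{d=0}^n (1/(d+1))(n+d choose n-d)(2d choose d) satisfies S(x)·(1 - x + r(x)) = 2, where r(x) is the unique formal power series with r(0)=1 and r(x)² = 1-6x+x². -/
open PowerSeries Finset

/-- hockey stick -/
lemma schroeder_hs (p m : ℕ) : ∑ k ∈ range (m+1), k.choose p = (m+1).choose (p+1) := by
  induction m with
  | zero =>
      cases p with
      | zero => simp
      | succ p =>
          rw [Finset.sum_range_one, Nat.choose_eq_zero_of_lt (by omega : 0 < p + 1),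
            Nat.choose_eq_zero_of_lt (by omega : 1 < p + 1 + 1)]
  | succ m ih =>
      rw [Finset.sum_range_succ, ih, Nat.choose_succ_succ (m+1) p, Nat.add_comm]

/-- dual Vandermonde -/
lemma schroeder_hv (p : ℕ) : ∀ (m q : ℕ),
    ∑ k ∈ range (m+1), (k.choose p) * ((m-k).choose q) = (m+1).choose (p+q+1) := by
  intro m
  induction m with
  | zero =>
      intro q
      cases p <;> cases q <;> simp [Nat.choose]
  | succ m ih =>
      intro q
      cases q with
      | zero => simpa using schroeder_hs p (m+1)
      | succ q =>
          rw [Finset.sum_range_succ]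
          have h1 : ∀ k ∈ range (m+1),
              (k.choose p) * ((m+1-k).choose (q+1))
                = (k.choose p) * ((m-k).choose q) + (k.choose p) * ((m-k).choose (q+1)) := by
            intro k hk
            rw [Finset.mem_range] at hk
            have h2 : m + 1 - k = (m - k) + 1 := by omega
            rw [h2, Nat.choose_succ_succ, Nat.mul_add]
          rw [Finset.sum_congr rfl h1, Finset.sum_add_distrib, ih q, ih (q+1), Nat.sub_self]
          have e : p+(q+1)+1 = p+q+1+1 := by omega
          rw [e, Nat.choose_succ_succ (m+1) (p+q+1)]
          simp

lemma schroeder_hv2 (i j n : ℕ) :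
    ∑ k ∈ range (n+1), ((k+i).choose (2*i)) * (((n-k)+j).choose (2*j))
      = (n+i+j+1).choose (2*i+2*j+1) := by
  have h := schroeder_hv (2*i) (n+i+j) (2*j)
  rw [← h, Finset.range_eq_Ico (n+i+j+1),
    ← Finset.sum_Ico_consecutive _ (Nat.zero_le (n+i+1)) (by omega : n+i+1 ≤ n+i+j+1),
    ← Finset.sum_Ico_consecutive _ (Nat.zero_le i) (by omega : i ≤ n+i+1)]
  have e1 : ∑ k ∈ Finset.Ico 0 i, (k.choose (2*i)) * ((n+i+j-k).choose (2*j)) = 0 := by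
    apply Finset.sum_eq_zero
    intro k hk
    rw [Finset.mem_Ico] at hk
    rw [Nat.choose_eq_zero_of_lt (by omega : k < 2*i), Nat.zero_mul]
  have e3 : ∑ k ∈ Finset.Ico (n+i+1) (n+i+j+1),
      (k.choose (2*i)) * ((n+i+j-k).choose (2*j)) = 0 := by
    apply Finset.sum_eq_zero
    intro k hk
    rw [Finset.mem_Ico] at hk
    rw [Nat.choose_eq_zero_of_lt (by omega : n+i+j-k < 2*j), Nat.mul_zero]
  have e2 : ∑ k ∈ Finset.Ico i (n+i+1), (k.choose (2*i)) * ((n+i+j-k).choose (2*j))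
      = ∑ k ∈ range (n+1), ((k+i).choose (2*i)) * (((n-k)+j).choose (2*j)) := by
    rw [Finset.sum_Ico_eq_sum_range]
    have h4 : n + i + 1 - i = n + 1 := by omega
    rw [h4]
    apply Finset.sum_congr rfl
    intro k hk
    rw [Finset.mem_range] at hk
    have h6 : n + i + j - (i + k) = (n - k) + j := by omega
    have h5 : i + k = k + i := by omega
    rw [h6, h5]
  rw [e1, e3, e2, Nat.zero_add, Finset.range_eq_Ico]
  simp

/-- The Schröder numbers as a natural-number sum. -/
def schroederN (n : ℕ) : ℕ := ∑ d ∈ range (n+1), (n+d).choose (2*d) * catalan d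

lemma schroederN_vanish (m d : ℕ) (h : m < d) : (m+d).choose (2*d) * catalan d = 0 := by
  rw [Nat.choose_eq_zero_of_lt (by omega), Nat.zero_mul]

lemma schroederN_extend (k N : ℕ) (h : k ≤ N) :
    schroederN k = ∑ d ∈ range (N+1), (k+d).choose (2*d) * catalan d := by
  rw [schroederN]
  apply Finset.sum_subset (Finset.range_subset_range.mpr (by omega : k + 1 ≤ N + 1))
  intro d hd hnd
  rw [Finset.mem_range] at hnd
  exact schroederN_vanish k d (by omega)

lemma catalan_succ_sum (e : ℕ) :
    catalan (e+1) = ∑ p ∈ Finset.HasAntidiagonal.antidiagonal e, catalan p.1 * catalan p.2 :=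
  catalan_succ' e

/-- The key recurrence. -/
lemma schroederN_rec (n : ℕ) :
    schroederN (n+1) = schroederN n + ∑ k ∈ range (n+1), schroederN k * schroederN (n-k) := by
  -- common middle expression
  set E : ℕ := ∑ e ∈ range (n+1), (n+e+1).choose (2*e+1) * catalan (e+1) with hE
  -- Step A : schroederN (n+1) = schroederN n + E
  have stepA : schroederN (n+1) = schroederN n + E := by
    have lhs : schroederN (n+1)
        = 1 + ∑ e ∈ range (n+1), (n+e+2).choose (2*e+2) * catalan (e+1) := by
      rw [schroederN, Finset.sum_range_succ']
      have : ∀ e ∈ range (n+1),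
          (n+1+(e+1)).choose (2*(e+1)) * catalan (e+1)
            = (n+e+2).choose (2*e+2) * catalan (e+1) := by
        intro e _
        congr 2 <;> omega
      rw [Finset.sum_congr rfl this]
      simp [Nat.add_comm]
    have rhs : schroederN n
        = 1 + ∑ e ∈ range (n+1), (n+e+1).choose (2*e+2) * catalan (e+1) := by
      rw [schroederN_extend n (n+1) (by omega), Finset.sum_range_succ']
      have : ∀ e ∈ range (n+1),
          (n+(e+1)).choose (2*(e+1)) * catalan (e+1)
            = (n+e+1).choose (2*e+2) * catalan (e+1) := by
        intro e _
        congr 2 <;> omega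
      rw [Finset.sum_congr rfl this]
      simp [Nat.add_comm]
    have pascal : ∀ e ∈ range (n+1),
        (n+e+2).choose (2*e+2) * catalan (e+1)
          = (n+e+1).choose (2*e+1) * catalan (e+1) + (n+e+1).choose (2*e+2) * catalan (e+1) := by
      intro e _
      have h := Nat.choose_succ_succ (n+e+1) (2*e+1)
      have h' : (n+e+2).choose (2*e+2) = (n+e+1).choose (2*e+1) + (n+e+1).choose (2*e+2) := by
        convert h using 2 <;> omega
      rw [h', Nat.add_mul]
    rw [lhs, rhs, Finset.sum_congr rfl pascal, Finset.sum_add_distrib, hE]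
    omega
  -- Step B : the convolution equals E
  have stepB : ∑ k ∈ range (n+1), schroederN k * schroederN (n-k) = E := by
    -- expand both factors to sums over range (n+1)
    have expand : ∀ k ∈ range (n+1),
        schroederN k * schroederN (n-k)
          = ∑ p ∈ range (n+1) ×ˢ range (n+1),
              ((k+p.1).choose (2*p.1) * catalan p.1) * ((n-k+p.2).choose (2*p.2) * catalan p.2) := by
      intro k hk
      rw [Finset.mem_range] at hk
      rw [schroederN_extend k n (by omega), schroederN_extend (n-k) n (by omega),
        Finset.sum_mul_sum, ← Finset.sum_product']
    rw [Finset.sum_congr rfl expand, Finset.sum_comm]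
    -- inner sum over k via hv2
    have inner : ∀ p ∈ range (n+1) ×ˢ range (n+1),
        (∑ k ∈ range (n+1),
            ((k+p.1).choose (2*p.1) * catalan p.1) * ((n-k+p.2).choose (2*p.2) * catalan p.2))
          = (n+p.1+p.2+1).choose (2*p.1+2*p.2+1) * (catalan p.1 * catalan p.2) := by
      intro p _
      have : ∀ k, ((k+p.1).choose (2*p.1) * catalan p.1) * ((n-k+p.2).choose (2*p.2) * catalan p.2)
          = ((k+p.1).choose (2*p.1) * ((n-k+p.2).choose (2*p.2))) * (catalan p.1 * catalan p.2) := by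
        intro k; ring
      simp only [this]
      rw [← Finset.sum_mul, schroeder_hv2]
    rw [Finset.sum_congr rfl inner]
    -- now reduce the square to the union of antidiagonals
    have hsub : (range (n+1)).biUnion (fun e => Finset.HasAntidiagonal.antidiagonal e)
        ⊆ range (n+1) ×ˢ range (n+1) := by
      intro p hp
      rw [Finset.mem_biUnion] at hp
      obtain ⟨e, he, hpe⟩ := hp
      rw [Finset.mem_range] at he
      rw [Finset.HasAntidiagonal.mem_antidiagonal] at hpe
      rw [Finset.mem_product, Finset.mem_range, Finset.mem_range]
      omega
    have hzero : ∀ p ∈ range (n+1) ×ˢ range (n+1),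
        p ∉ (range (n+1)).biUnion (fun e => Finset.HasAntidiagonal.antidiagonal e) →
        (n+p.1+p.2+1).choose (2*p.1+2*p.2+1) * (catalan p.1 * catalan p.2) = 0 := by
      intro p _ hp
      have hgt : n < p.1 + p.2 := by
        by_contra hle
        push_neg at hle
        apply hp
        rw [Finset.mem_biUnion]
        exact ⟨p.1 + p.2, Finset.mem_range.mpr (by omega), Finset.HasAntidiagonal.mem_antidiagonal.mpr rfl⟩
      rw [Nat.choose_eq_zero_of_lt (by omega), Nat.zero_mul]
    rw [← Finset.sum_subset hsub hzero]
    have hdisj : (↑(range (n+1)) : Set ℕ).PairwiseDisjoint (fun e => Finset.HasAntidiagonal.antidiagonal e) := by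
      intro a _ b _ hab
      simp only [Finset.disjoint_left]
      intro p hpa hpb
      rw [Finset.HasAntidiagonal.mem_antidiagonal] at hpa hpb
      exact hab (hpa ▸ hpb)
    rw [Finset.sum_biUnion hdisj, hE]
    apply Finset.sum_congr rfl
    intro e he
    rw [Finset.mem_range] at he
    have : ∀ p ∈ Finset.HasAntidiagonal.antidiagonal e,
        (n+p.1+p.2+1).choose (2*p.1+2*p.2+1) * (catalan p.1 * catalan p.2)
          = (n+e+1).choose (2*e+1) * (catalan p.1 * catalan p.2) := by
      intro p hp
      rw [Finset.HasAntidiagonal.mem_antidiagonal] at hp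
      congr 2 <;> omega
    rw [Finset.sum_congr rfl this, ← Finset.mul_sum, ← catalan_succ_sum]
  rw [stepA, stepB]

lemma schroeder_coeff (n : ℕ) :
    ∑ d ∈ Finset.range (n + 1),
        (1 / (d + 1 : ℚ)) * ((n + d).choose (n - d) : ℚ) * ((2 * d).choose d : ℚ)
      = (schroederN n : ℚ) := by
  rw [schroederN, Nat.cast_sum]
  apply Finset.sum_congr rfl
  intro d hd
  rw [Finset.mem_range] at hd
  have h1 : (n + d).choose (n - d) = (n + d).choose (2 * d) := by
    have h2 : n - d = (n + d) - 2 * d := by omega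
    rw [h2, Nat.choose_symm (by omega)]
  have h3 : ((2 * d).choose d : ℚ) = (d + 1 : ℚ) * (catalan d : ℚ) := by
    have := succ_mul_catalan_eq_centralBinom d
    rw [Nat.centralBinom_eq_two_mul_choose] at this
    exact_mod_cast this.symm
  rw [h1, h3]
  push_cast
  have hd1 : (d + 1 : ℚ) ≠ 0 := by positivity
  field_simp

theorem schroeder_gf (r : PowerSeries ℚ)
    (h0 : PowerSeries.constantCoeff r = 1)
    (hr : r ^ 2 = 1 - 6 * PowerSeries.X + PowerSeries.X ^ 2) :
    (PowerSeries.mk fun n =>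
        ∑ d ∈ Finset.range (n + 1),
          (1 / (d + 1 : ℚ)) * ((n + d).choose (n - d) : ℚ) * ((2 * d).choose d : ℚ)) *
      (1 - PowerSeries.X + r) = 2 := by
  set S : PowerSeries ℚ := PowerSeries.mk fun n =>
      ∑ d ∈ Finset.range (n + 1),
        (1 / (d + 1 : ℚ)) * ((n + d).choose (n - d) : ℚ) * ((2 * d).choose d : ℚ) with hSdef
  have hcoeff : ∀ n, (PowerSeries.coeff n) S = (schroederN n : ℚ) := by
    intro n
    rw [hSdef, PowerSeries.coeff_mk, schroeder_coeff]
  have hS : S = 1 + X * S + X * S ^ 2 := by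
    ext n
    cases n with
    | zero =>
        simp only [map_add, PowerSeries.coeff_zero_eq_constantCoeff, map_mul, map_one,
          map_pow, constantCoeff_X, zero_mul, add_zero]
        have := hcoeff 0
        rw [PowerSeries.coeff_zero_eq_constantCoeff] at this
        rw [this]
        simp [schroederN]
    | succ n =>
        rw [map_add, map_add, PowerSeries.coeff_one, PowerSeries.coeff_succ_X_mul,
          PowerSeries.coeff_succ_X_mul, hcoeff, hcoeff, sq, PowerSeries.coeff_mul,
          Finset.Nat.sum_antidiagonal_eq_sum_range_succ_mk]
        simp only [hcoeff]
        rw [schroederN_rec n]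
        push_cast
        simp
  have hu : (1 - X - 2 * X * S) ^ 2 = r ^ 2 := by
    rw [hr]
    linear_combination (-4 * (X : PowerSeries ℚ)) * hS
  have hru : r = 1 - X - 2 * X * S := by
    have hmul : (r - (1 - X - 2 * X * S)) * (r + (1 - X - 2 * X * S)) = 0 := by
      linear_combination -hu
    rcases mul_eq_zero.mp hmul with h | h
    · exact sub_eq_zero.mp h
    · exfalso
      have := congrArg (PowerSeries.constantCoeff) h
      simp only [map_add, map_sub, map_mul, map_one, constantCoeff_X, h0, map_zero,
        zero_mul, mul_zero, sub_zero] at this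
      norm_num at this
  rw [hru]
  linear_combination 2 * hS
end

section
/- The generating function T(x) of the central trinomial coefficients T_n = ∑_{d=0}^n (n choose 2d)(2d choose d) satisfies T(x)² · (1 - 2x - 3x²) = 1 as formal power series over ℚ. -/
open PowerSeries Finset

/-- Recursion for generalized binomial coefficients over ℚ. -/
lemma ring_choose_succ (r : ℚ) (k : ℕ) :
    (k + 1 : ℚ) * Ring.choose r (k + 1) = Ring.choose r k * (r - k) := by
  have h1 := Ring.descPochhammer_eq_factorial_smul_choose r (k + 1)
  have h2 := Ring.descPochhammer_eq_factorial_smul_choose r k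
  rw [descPochhammer_succ_right, Polynomial.smeval_mul, h2] at h1
  have hX : (Polynomial.X - (k : Polynomial ℤ)).smeval r = r - k := by
    rw [Polynomial.smeval_sub, Polynomial.smeval_X, Polynomial.smeval_natCast]
    simp
  rw [hX] at h1
  have hfac : ((k + 1).factorial : ℚ) = (k + 1) * (k.factorial : ℚ) := by
    push_cast [Nat.factorial_succ]; ring
  have hk : (k.factorial : ℚ) ≠ 0 := by
    exact_mod_cast Nat.factorial_ne_zero k
  rw [nsmul_eq_mul, nsmul_eq_mul, hfac] at h1
  apply mul_left_cancel₀ hk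
  rw [show (k.factorial : ℚ) * ((k + 1 : ℚ) * Ring.choose r (k + 1))
    = (k + 1 : ℚ) * (k.factorial : ℚ) * Ring.choose r (k + 1) by ring, ← h1]
  ring

lemma ring_choose_neg_one (a : ℕ) : Ring.choose (-1 : ℚ) a = (-1) ^ a := by
  induction a with
  | zero => simp [Ring.choose_zero_right]
  | succ k ih =>
    have hk : (k + 1 : ℚ) ≠ 0 := by positivity
    apply mul_left_cancel₀ hk
    rw [ring_choose_succ, ih]
    ring

lemma ring_choose_neg_half (a : ℕ) :
    Ring.choose (-(1/2) : ℚ) a = (-(1/4)) ^ a * ((2 * a).choose a : ℚ) := by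
  induction a with
  | zero => simp [Ring.choose_zero_right]
  | succ k ih =>
    have hcb := Nat.succ_mul_centralBinom_succ k
    unfold Nat.centralBinom at hcb
    have hcb' : ((k+1 : ℚ)) * ((2 * (k+1)).choose (k+1) : ℚ)
        = 2 * (2 * (k:ℚ) + 1) * ((2 * k).choose k : ℚ) := by
      exact_mod_cast congrArg (Nat.cast : ℕ → ℚ) hcb
    have hk : (k + 1 : ℚ) ≠ 0 := by positivity
    apply mul_left_cancel₀ hk
    rw [ring_choose_succ, ih]
    linear_combination ((1:ℚ)/4) * (-(1/4) : ℚ) ^ k * hcb'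

/-- Convolution of central binomial coefficients. -/
lemma central_binom_conv (m : ℕ) :
    ∑ ij ∈ antidiagonal m, ((2 * ij.1).choose ij.1 : ℚ) * ((2 * ij.2).choose ij.2 : ℚ)
      = 4 ^ m := by
  have h := Ring.add_choose_eq (r := (-(1/2) : ℚ)) (s := -(1/2)) m (Commute.all _ _)
  rw [show (-(1/2) : ℚ) + -(1/2) = -1 by norm_num, ring_choose_neg_one] at h
  have h2 : ∑ ij ∈ antidiagonal m,
      Ring.choose (-(1/2) : ℚ) ij.1 * Ring.choose (-(1/2) : ℚ) ij.2
      = (-(1/4)) ^ m * ∑ ij ∈ antidiagonal m,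
          ((2 * ij.1).choose ij.1 : ℚ) * ((2 * ij.2).choose ij.2 : ℚ) := by
    rw [mul_sum]
    refine sum_congr rfl fun ij hij => ?_
    have hij' := Finset.HasAntidiagonal.mem_antidiagonal.mp hij
    rw [ring_choose_neg_half, ring_choose_neg_half, ← hij', pow_add]
    ring
  rw [h2] at h
  have h4 : ((-4 : ℚ)) ^ m * (-(1/4)) ^ m = 1 := by rw [← mul_pow]; norm_num
  calc ∑ ij ∈ antidiagonal m, ((2 * ij.1).choose ij.1 : ℚ) * ((2 * ij.2).choose ij.2 : ℚ)
      = ((-4 : ℚ)) ^ m * (-(1/4)) ^ m *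
        ∑ ij ∈ antidiagonal m, ((2 * ij.1).choose ij.1 : ℚ) * ((2 * ij.2).choose ij.2 : ℚ) := by
        rw [h4, one_mul]
    _ = ((-4 : ℚ)) ^ m * ((-1 : ℚ)) ^ m := by rw [mul_assoc, ← h]
    _ = 4 ^ m := by rw [← mul_pow]; norm_num

/-- Hockey-stick/Vandermonde style identity. -/
lemma choose_conv (n : ℕ) : ∀ r s : ℕ,
    ∑ i ∈ range (n + 1), (i.choose r) * ((n - i).choose s) = (n + 1).choose (r + s + 1) := by
  induction n with
  | zero =>
    intro r s
    cases r <;> cases s <;> simp [Nat.choose]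
  | succ n ih =>
    intro r s
    rw [Finset.sum_range_succ']
    simp only [Nat.succ_sub_succ]
    cases r with
    | zero =>
      simp only [Nat.choose_zero_right, one_mul, Nat.zero_add]
      have : ∑ i ∈ range (n + 1), ((n - i).choose s) =
          ∑ i ∈ range (n + 1), (i.choose 0) * ((n - i).choose s) := by
        simp
      rw [this, ih 0 s]
      simp [Nat.choose_succ_succ (n + 1) s]
      try omega
    | succ r =>
      simp only [Nat.choose_succ_succ _ r, add_mul, Nat.choose_zero_succ, zero_mul, add_zero]
      rw [Finset.sum_add_distrib, ih r s, ih (r + 1) s]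
      rw [show r + 1 + s + 1 = (r + s + 1) + 1 by ring, Nat.choose_succ_succ (n + 1)]
      try ring_nf
      try omega

noncomputable def SO (n : ℕ) : ℚ := ∑ m ∈ range (n + 1), (n.choose (2 * m + 1) : ℚ) * 4 ^ m
noncomputable def SE (n : ℕ) : ℚ := ∑ m ∈ range (n + 1), (n.choose (2 * m) : ℚ) * 4 ^ m

lemma SO_succ (n : ℕ) : SO (n + 1) = SO n + SE n := by
  unfold SO SE
  have : ∀ m, ((n+1).choose (2 * m + 1) : ℚ) = (n.choose (2 * m) : ℚ) + n.choose (2 * m + 1) := by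
    intro m; exact_mod_cast congrArg (Nat.cast : ℕ → ℚ) (Nat.choose_succ_succ n (2 * m))
  simp only [this, add_mul]
  rw [Finset.sum_add_distrib, Finset.sum_range_succ, Finset.sum_range_succ (n := n + 1)]
  have h1 : (n.choose (2 * (n + 1)) : ℚ) = 0 := by
    rw [Nat.choose_eq_zero_of_lt (by omega)]; norm_num
  have h2 : (n.choose (2 * (n + 1) + 1) : ℚ) = 0 := by
    rw [Nat.choose_eq_zero_of_lt (by omega)]; norm_num
  rw [h1, h2]
  ring

lemma SE_succ (n : ℕ) : SE (n + 1) = SE n + 4 * SO n := by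
  unfold SO SE
  rw [Finset.sum_range_succ' (fun m => ((n+1).choose (2 * m) : ℚ) * 4 ^ m) (n + 1)]
  have key : ∀ m, ((n+1).choose (2 * (m+1)) : ℚ)
      = (n.choose (2 * m + 1) : ℚ) + n.choose (2 * m + 2) := by
    intro m
    have := Nat.choose_succ_succ n (2 * m + 1)
    rw [show 2 * (m + 1) = 2 * m + 1 + 1 by ring]
    exact_mod_cast congrArg (Nat.cast : ℕ → ℚ) this
  simp only [key, add_mul]
  rw [Finset.sum_add_distrib]
  have h3 : ∑ m ∈ range (n + 1), (n.choose (2 * m + 2) : ℚ) * 4 ^ (m + 1)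
      = ∑ m ∈ range (n + 1), (n.choose (2 * m) : ℚ) * 4 ^ m - 1
        + (n.choose (2 * (n + 1)) : ℚ) * 4 ^ (n + 1) := by
    have e1 := Finset.sum_range_succ' (fun m => (n.choose (2 * m) : ℚ) * 4 ^ m) (n + 1)
    have e2 := Finset.sum_range_succ (fun m => (n.choose (2 * m) : ℚ) * 4 ^ m) (n + 1)
    simp only [show ∀ m:ℕ, 2 * (m+1) = 2 * m + 2 from fun m => by ring] at e1
    rw [e2] at e1
    simp only [Nat.mul_zero, Nat.choose_zero_right, Nat.cast_one, pow_zero, mul_one] at e1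
    linarith [e1]
  have h4 : (n.choose (2 * (n + 1)) : ℚ) = 0 := by
    rw [Nat.choose_eq_zero_of_lt (by omega)]; norm_num
  rw [h3, h4]
  have h5 : ∑ m ∈ range (n + 1), (n.choose (2 * m + 1) : ℚ) * 4 ^ (m + 1)
      = 4 * ∑ m ∈ range (n + 1), (n.choose (2 * m + 1) : ℚ) * 4 ^ m := by
    rw [Finset.mul_sum]; refine sum_congr rfl fun m _ => by ring
  rw [h5]
  simp
  ring

lemma SO_SE_closed (n : ℕ) :
    SO n = (3 ^ n - (-1) ^ n) / 4 ∧ SE n = (3 ^ n + (-1) ^ n) / 2 := by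
  induction n with
  | zero =>
    constructor
    · simp [SO]
    · simp [SE]
  | succ n ih =>
    obtain ⟨h1, h2⟩ := ih
    constructor
    · rw [SO_succ, h1, h2]; ring
    · rw [SE_succ, h1, h2]; ring

theorem central_trinomial_gf_sq :
    (PowerSeries.mk fun n =>
        ∑ d ∈ Finset.range (n + 1), (n.choose (2 * d) : ℚ) * ((2 * d).choose d : ℚ)) ^ 2 *
      (1 - 2 * PowerSeries.X - 3 * PowerSeries.X ^ 2) = 1 := by
  set t : ℕ → ℚ := fun n =>
    ∑ d ∈ Finset.range (n + 1), (n.choose (2 * d) : ℚ) * ((2 * d).choose d : ℚ) with ht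
  -- Step 1: coefficient of T^2
  have key : ∀ n : ℕ, (coeff n) ((PowerSeries.mk t) ^ 2) = (3 ^ (n+1) + (-1) ^ n) / 4 := by
    intro n
    rw [sq, coeff_mul]
    simp only [coeff_mk]
    -- extend inner ranges to range (n+1)
    have hext : ∀ i ∈ range (n + 1), ∀ j, i + j = n →
        t i * t j = ∑ a ∈ range (n + 1), ∑ b ∈ range (n + 1),
          ((i.choose (2*a) : ℚ) * ((2*a).choose a : ℚ)) *
          ((j.choose (2*b) : ℚ) * ((2*b).choose b : ℚ)) := by
      intro i hi j hij
      have hti : t i = ∑ a ∈ range (n + 1), (i.choose (2*a) : ℚ) * ((2*a).choose a : ℚ) := by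
        rw [ht]
        apply Finset.sum_subset
        · exact Finset.range_subset_range.mpr (by omega)
        · intro a _ ha
          have : i < 2 * a := by
            simp only [Finset.mem_range, not_lt] at ha ⊢; omega
          rw [Nat.choose_eq_zero_of_lt this]; norm_num
      have htj : t j = ∑ b ∈ range (n + 1), (j.choose (2*b) : ℚ) * ((2*b).choose b : ℚ) := by
        rw [ht]
        apply Finset.sum_subset
        · exact Finset.range_subset_range.mpr (by omega)
        · intro b _ hb
          have : j < 2 * b := by
            simp only [Finset.mem_range, not_lt] at hb ⊢; omega
          rw [Nat.choose_eq_zero_of_lt this]; norm_num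
      rw [hti, htj, Finset.sum_mul_sum]
    rw [Finset.Nat.sum_antidiagonal_eq_sum_range_succ (fun i j => t i * t j)]
    rw [Finset.sum_congr rfl (fun i hi => hext i hi (n - i)
      (by simp only [Finset.mem_range] at hi; omega))]
    rw [Finset.sum_comm]
    have step2 : ∀ a, ∑ i ∈ range (n + 1), ∑ b ∈ range (n + 1),
        ((i.choose (2*a) : ℚ) * ((2*a).choose a : ℚ)) *
        (((n-i).choose (2*b) : ℚ) * ((2*b).choose b : ℚ))
        = ∑ b ∈ range (n + 1), (((2*a).choose a : ℚ) * ((2*b).choose b : ℚ))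
            * ((n+1).choose (2*a + 2*b + 1) : ℚ) := by
      intro a
      rw [Finset.sum_comm]
      refine sum_congr rfl fun b _ => ?_
      have hcc : ((∑ i ∈ range (n+1), (i.choose (2*a)) * ((n-i).choose (2*b)) : ℕ) : ℚ)
          = ((n+1).choose (2*a + 2*b + 1) : ℚ) := by
        exact_mod_cast congrArg (Nat.cast : ℕ → ℚ) (choose_conv n (2*a) (2*b))
      push_cast at hcc
      calc ∑ i ∈ range (n + 1),
            ((i.choose (2*a) : ℚ) * ((2*a).choose a : ℚ)) *
            (((n-i).choose (2*b) : ℚ) * ((2*b).choose b : ℚ))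
          = (((2*a).choose a : ℚ) * ((2*b).choose b : ℚ)) *
            ∑ i ∈ range (n + 1), (i.choose (2*a) : ℚ) * ((n-i).choose (2*b) : ℚ) := by
            rw [Finset.mul_sum]; exact sum_congr rfl fun i _ => by ring
        _ = _ := by rw [hcc]
    rw [Finset.sum_congr rfl (fun a _ => step2 a)]
    -- Step 3: regroup by a+b=m
    have step3 : ∑ a ∈ range (n + 1), ∑ b ∈ range (n + 1),
        (((2*a).choose a : ℚ) * ((2*b).choose b : ℚ)) * ((n+1).choose (2*a + 2*b + 1) : ℚ)
        = ∑ m ∈ range (n + 1), ((n+1).choose (2*m + 1) : ℚ) * 4 ^ m := by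
      set g : ℕ × ℕ → ℚ := fun p =>
        (((2*p.1).choose p.1 : ℚ) * ((2*p.2).choose p.2 : ℚ))
          * ((n+1).choose (2*p.1 + 2*p.2 + 1) : ℚ) with hg
      have hL : ∑ a ∈ range (n + 1), ∑ b ∈ range (n + 1),
          (((2*a).choose a : ℚ) * ((2*b).choose b : ℚ)) * ((n+1).choose (2*a + 2*b + 1) : ℚ)
          = ∑ p ∈ range (n+1) ×ˢ range (n+1), g p := by
        rw [Finset.sum_product]
      have hdisj : ((range (n+1) : Finset ℕ) : Set ℕ).PairwiseDisjoint
          (fun m => (antidiagonal m : Finset (ℕ × ℕ))) := by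
        intro x _ y _ hxy
        simp only [Finset.disjoint_left]
        intro p hp hq
        exact hxy ((Finset.HasAntidiagonal.mem_antidiagonal.mp hp).symm.trans (Finset.HasAntidiagonal.mem_antidiagonal.mp hq))
      have hR : ∑ m ∈ range (n + 1), ((n+1).choose (2*m + 1) : ℚ) * 4 ^ m
          = ∑ p ∈ (range (n+1)).biUnion (fun m => antidiagonal m), g p := by
        rw [Finset.sum_biUnion hdisj]
        refine sum_congr rfl fun m hm => ?_
        have : ∑ p ∈ antidiagonal m, g p
            = ((n+1).choose (2*m + 1) : ℚ) * ∑ p ∈ antidiagonal m,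
                (((2*p.1).choose p.1 : ℚ) * ((2*p.2).choose p.2 : ℚ)) := by
          rw [Finset.mul_sum]
          refine sum_congr rfl fun p hp => ?_
          have hpm := Finset.HasAntidiagonal.mem_antidiagonal.mp hp
          rw [hg]
          simp only
          rw [show 2*p.1 + 2*p.2 = 2*m by omega]
          ring
        rw [this, central_binom_conv]
      rw [hL, hR]
      refine (Finset.sum_subset ?_ ?_).symm
      · intro p hp
        simp only [Finset.mem_biUnion, Finset.mem_range, Finset.HasAntidiagonal.mem_antidiagonal] at hp
        obtain ⟨m, hm, hpm⟩ := hp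
        simp only [Finset.mem_product, Finset.mem_range]
        omega
      · intro p hp hnp
        have hsum : n < p.1 + p.2 := by
          by_contra hc
          push_neg at hc
          exact hnp (Finset.mem_biUnion.mpr ⟨p.1 + p.2, Finset.mem_range.mpr (by omega),
            Finset.HasAntidiagonal.mem_antidiagonal.mpr rfl⟩)
        rw [hg]
        simp only
        rw [show ((n+1).choose (2 * p.1 + 2 * p.2 + 1)) = 0 from
          Nat.choose_eq_zero_of_lt (by omega)]
        norm_num
    rw [step3]
    -- Step 4: closed form
    have hSO := (SO_SE_closed (n + 1)).1
    unfold SO at hSO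
    rw [Finset.sum_range_succ] at hSO
    have htop : ((n+1).choose (2 * (n + 1) + 1) : ℚ) = 0 := by
      rw [Nat.choose_eq_zero_of_lt (by omega)]; norm_num
    rw [htop, zero_mul, add_zero] at hSO
    rw [hSO]
    rw [show ((-1 : ℚ)) ^ (n + 1) = -(-1 : ℚ) ^ n by ring]
    ring
  -- Step 2: conclude
  have hU : (PowerSeries.mk t) ^ 2 = PowerSeries.mk (fun n => (3 ^ (n+1) + (-1) ^ n) / 4) := by
    ext n
    rw [key n, coeff_mk]
  rw [hU]
  have h2C : (2 : ℚ⟦X⟧) = C (2:ℚ) := (map_ofNat (C (R := ℚ)) 2).symm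
  have h3C : (3 : ℚ⟦X⟧) = C (3:ℚ) := (map_ofNat (C (R := ℚ)) 3).symm
  set U := PowerSeries.mk (fun n => ((3:ℚ) ^ (n+1) + (-1) ^ n) / 4) with hUdef
  ext n
  rw [mul_sub, mul_sub, mul_one, map_sub, map_sub,
    show U * (2 * X) = C (2:ℚ) * (U * X) by rw [h2C]; ring,
    show U * (3 * X ^ 2) = C (3:ℚ) * (U * X ^ 2) by rw [h3C]; ring,
    coeff_C_mul, coeff_C_mul]
  match n with
  | 0 =>
    rw [coeff_zero_mul_X, coeff_mul_X_pow' U 2 0]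
    simp [hUdef]
    norm_num
  | 1 =>
    rw [show (1 : ℕ) = 0 + 1 from rfl, coeff_succ_mul_X, coeff_mul_X_pow' U 2 1]
    simp [hUdef]
    norm_num
  | (m + 2) =>
    rw [show m + 2 = (m + 1) + 1 from rfl, coeff_succ_mul_X,
      show m + 1 + 1 = m + 2 from rfl,
      show (coeff (m + 2)) (U * X ^ 2) = coeff m U from coeff_mul_X_pow U 2 m]
    simp only [hUdef, coeff_mk, coeff_one]
    rw [if_neg (by omega)]
    rw [show ((-1 : ℚ)) ^ (m + 2) = (-1 : ℚ) ^ m by ring,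
      show ((-1 : ℚ)) ^ (m + 1) = -(-1 : ℚ) ^ m by ring]
    ring
end

section
/- The generating function of the sequence a_n = ∑_{d=0}^n (n choose d)(2d choose d) satisfies (∑_{n≥0} a_n x^n)² · (1 - 6x + 5x²) = 1 as formal power series over ℚ. -/
open PowerSeries Finset

private lemma hockey (n d : ℕ) :
    ∑ i ∈ range (n + 1), i.choose d = (n + 1).choose (d + 1) := by
  rw [← Nat.sum_Icc_choose n d]
  refine (Finset.sum_subset ?_ ?_).symm
  · intro i hi
    simp only [mem_Icc] at hi
    simp [Nat.lt_succ_iff, hi.2]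
  · intro i hi hni
    simp only [mem_Icc, mem_range, Nat.lt_succ_iff] at hi hni
    exact Nat.choose_eq_zero_of_lt (by omega)

private lemma vanT : ∀ n c d : ℕ,
    ∑ i ∈ range (n + 1), i.choose c * (n - i).choose d = (n + 1).choose (c + d + 1) := by
  intro n
  induction n with
  | zero => intro c d; cases c <;> cases d <;> simp [Nat.choose]
  | succ n ih =>
    intro c d
    match c with
    | 0 =>
      simp only [Nat.choose_zero_right, one_mul]
      have := Finset.sum_range_reflect (fun j => j.choose d) (n + 2)
      simp only [Nat.succ_sub_succ, Nat.sub_zero] at this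
      rw [show n + 1 + 1 = n + 2 from rfl, this, hockey]
      norm_num
    | c + 1 =>
      rw [Finset.sum_range_succ']
      have step : ∀ i ∈ range (n + 1),
          (i + 1).choose (c + 1) * (n + 1 - (i + 1)).choose d
            = i.choose c * (n - i).choose d + i.choose (c + 1) * (n - i).choose d := by
        intro i _
        rw [Nat.succ_sub_succ, Nat.choose_succ_succ, add_mul]
      rw [Finset.sum_congr rfl step, Finset.sum_add_distrib, ih, ih,
        show c + 1 + d + 1 = c + d + 1 + 1 by ring,
        Nat.choose_succ_succ (n + 1) (c + d + 1)]
      simp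

private noncomputable def cb (k : ℕ) : ℚ := (Nat.centralBinom k : ℚ)

private lemma cb_rec (k : ℕ) : ((k : ℚ) + 1) * cb (k + 1) = (4 * k + 2) * cb k := by
  have h := Nat.succ_mul_centralBinom_succ k
  have : (((k + 1) * Nat.centralBinom (k + 1) : ℕ) : ℚ)
      = ((2 * (2 * k + 1) * Nat.centralBinom k : ℕ) : ℚ) := by rw [h]
  push_cast at this
  unfold cb
  linarith

/-- symmetric-weight trick: `2 ∑ k·g(k, m-k) = m ∑ g(k, m-k)` for symmetric `g`. -/
private lemma twoT (g : ℕ → ℕ → ℚ) (hg : ∀ i j, g i j = g j i) (m : ℕ) :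
    2 * ∑ k ∈ range (m + 1), (k : ℚ) * g k (m - k)
      = (m : ℚ) * ∑ k ∈ range (m + 1), g k (m - k) := by
  have hrefl : ∑ k ∈ range (m + 1), (k : ℚ) * g k (m - k)
      = ∑ k ∈ range (m + 1), ((m - k : ℕ) : ℚ) * g k (m - k) := by
    rw [← Finset.sum_range_reflect (fun k => ((m - k : ℕ) : ℚ) * g k (m - k)) (m + 1)]
    refine Finset.sum_congr rfl fun j hj => ?_
    have hj' : j ≤ m := by simpa [Nat.lt_succ_iff] using hj
    simp only [Nat.succ_sub_succ, Nat.sub_zero]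
    rw [Nat.sub_sub_self hj', hg]
  calc 2 * ∑ k ∈ range (m + 1), (k : ℚ) * g k (m - k)
      = ∑ k ∈ range (m + 1), (k : ℚ) * g k (m - k)
        + ∑ k ∈ range (m + 1), ((m - k : ℕ) : ℚ) * g k (m - k) := by rw [← hrefl]; ring
    _ = ∑ k ∈ range (m + 1), ((k : ℚ) + ((m - k : ℕ) : ℚ)) * g k (m - k) := by
        rw [← Finset.sum_add_distrib]; exact Finset.sum_congr rfl fun k _ => by ring
    _ = ∑ k ∈ range (m + 1), (m : ℚ) * g k (m - k) := by
        refine Finset.sum_congr rfl fun k hk => ?_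
        have hk' : k ≤ m := by simpa [Nat.lt_succ_iff] using hk
        rw [Nat.cast_sub hk']; ring
    _ = (m : ℚ) * ∑ k ∈ range (m + 1), g k (m - k) := by rw [Finset.mul_sum]

private lemma cb_conv : ∀ n : ℕ, ∑ k ∈ range (n + 1), cb k * cb (n - k) = 4 ^ n := by
  intro n
  induction n with
  | zero => simp [cb, Nat.centralBinom]
  | succ n ih =>
    have hsym : ∀ i j, cb i * cb j = cb j * cb i := fun i j => mul_comm _ _
    have key : 2 * ∑ k ∈ range (n + 2), (k : ℚ) * (cb k * cb (n + 1 - k))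
        = 4 * (n + 1) * 4 ^ n := by
      rw [Finset.sum_range_succ']
      simp only [Nat.cast_zero, zero_mul, add_zero, Nat.succ_sub_succ]
      have step : ∀ j ∈ range (n + 1),
          ((j + 1 : ℕ) : ℚ) * (cb (j + 1) * cb (n - j))
            = (4 * j + 2) * cb j * cb (n - j) := by
        intro j _
        push_cast
        rw [show ((j : ℚ) + 1) * (cb (j + 1) * cb (n - j))
            = (((j : ℚ) + 1) * cb (j + 1)) * cb (n - j) by ring, cb_rec]
      rw [Finset.sum_congr rfl step]
      have expand : ∑ j ∈ range (n + 1), (4 * (j : ℚ) + 2) * cb j * cb (n - j)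
          = 4 * ∑ j ∈ range (n + 1), (j : ℚ) * (cb j * cb (n - j))
            + 2 * ∑ j ∈ range (n + 1), cb j * cb (n - j) := by
        rw [Finset.mul_sum, Finset.mul_sum, ← Finset.sum_add_distrib]
        exact Finset.sum_congr rfl fun j _ => by ring
      rw [expand, ih]
      have h2 := twoT (fun i j => cb i * cb j) hsym n
      -- 2 * T = n * 4^n
      rw [ih] at h2
      linarith
    have h2 := twoT (fun i j => cb i * cb j) hsym (n + 1)
    rw [key] at h2
    have hn : ((n : ℚ) + 1) ≠ 0 := by positivity
    push_cast at h2
    have : ((n : ℚ) + 1) * ∑ k ∈ range (n + 2), cb k * cb (n + 1 - k)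
        = ((n : ℚ) + 1) * 4 ^ (n + 1) := by rw [← h2]; ring
    exact mul_left_cancel₀ hn this


private noncomputable def F : PowerSeries ℚ :=
  PowerSeries.mk fun n =>
    ∑ d ∈ Finset.range (n + 1), (n.choose d : ℚ) * ((2 * d).choose d : ℚ)

private lemma coeffF_ext (n N : ℕ) (h : n ≤ N) :
    (PowerSeries.coeff n) F = ∑ d ∈ range (N + 1), (n.choose d : ℚ) * cb d := by
  rw [F, coeff_mk]
  refine Finset.sum_subset (by simp; omega) ?_
  intro d _ hd
  simp only [mem_range, Nat.lt_succ_iff, not_le] at hd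
  rw [Nat.choose_eq_zero_of_lt hd]
  simp


private lemma coeffF2 (n : ℕ) :
    (PowerSeries.coeff n) (F ^ 2)
      = ∑ s ∈ range (n + 1), ((n + 1).choose (s + 1) : ℚ) * 4 ^ s := by
  rw [sq, coeff_mul, Finset.Nat.sum_antidiagonal_eq_sum_range_succ_mk]
  have h1 : ∀ i ∈ range (n + 1),
      (PowerSeries.coeff i) F * (PowerSeries.coeff (n - i)) F
        = ∑ c ∈ range (n + 1), ∑ d ∈ range (n + 1),
            (i.choose c : ℚ) * cb c * ((n - i).choose d * cb d) := by
    intro i hi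
    have hi' : i ≤ n := by simpa [Nat.lt_succ_iff] using hi
    rw [coeffF_ext i n hi', coeffF_ext (n - i) n (Nat.sub_le n i), Finset.sum_mul_sum]
  rw [Finset.sum_congr rfl h1]
  rw [Finset.sum_comm]
  have h2 : ∀ c ∈ range (n + 1),
      (∑ i ∈ range (n + 1), ∑ d ∈ range (n + 1),
        (i.choose c : ℚ) * cb c * ((n - i).choose d * cb d))
      = ∑ d ∈ range (n + 1), cb c * cb d * ((n + 1).choose (c + d + 1) : ℚ) := by
    intro c _
    rw [Finset.sum_comm]
    refine Finset.sum_congr rfl fun d _ => ?_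
    have : ∑ i ∈ range (n + 1), (i.choose c : ℚ) * cb c * ((n - i).choose d * cb d)
        = cb c * cb d * ∑ i ∈ range (n + 1), ((i.choose c : ℚ) * ((n - i).choose d : ℚ)) := by
      rw [Finset.mul_sum]
      exact Finset.sum_congr rfl fun i _ => by ring
    rw [this]
    congr 1
    norm_cast
    exact vanT n c d
  rw [Finset.sum_congr rfl h2]
  -- now flip the triangle
  have h3 : ∀ c ∈ range (n + 1),
      (∑ d ∈ range (n + 1), cb c * cb d * ((n + 1).choose (c + d + 1) : ℚ))
        = ∑ d ∈ range (n + 1 - c), cb c * cb d * ((n + 1).choose (c + d + 1) : ℚ) := by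
    intro c hc
    have hc' : c ≤ n := by simpa [Nat.lt_succ_iff] using hc
    refine (Finset.sum_subset (Finset.range_subset_range.mpr (by omega)) ?_).symm
    intro d _ hd
    simp only [mem_range, not_lt] at hd
    rw [Nat.choose_eq_zero_of_lt (by omega)]
    simp
  rw [Finset.sum_congr rfl h3, ← Finset.sum_range_diag_flip (n + 1)
    (fun c d => cb c * cb d * ((n + 1).choose (c + d + 1) : ℚ))]
  refine Finset.sum_congr rfl fun s hs => ?_
  have hsum : ∀ k ∈ range (s + 1),
      cb k * cb (s - k) * ((n + 1).choose (k + (s - k) + 1) : ℚ)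
        = ((n + 1).choose (s + 1) : ℚ) * (cb k * cb (s - k)) := by
    intro k hk
    have hk' : k ≤ s := by simpa [Nat.lt_succ_iff] using hk
    rw [Nat.add_sub_cancel' hk']
    ring
  rw [Finset.sum_congr rfl hsum, ← Finset.mul_sum, cb_conv s]



private lemma coeffF2' (n : ℕ) :
    (PowerSeries.coeff n) (F ^ 2) = (5 ^ (n + 1) - 1) / 4 := by
  rw [coeffF2]
  have hb : (5 : ℚ) ^ (n + 1)
      = ∑ k ∈ range (n + 2), 4 ^ k * 1 ^ (n + 1 - k) * ((n + 1).choose k : ℚ) := by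
    rw [show (5 : ℚ) = 4 + 1 by norm_num, add_pow]
  have key : (5 : ℚ) ^ (n + 1)
      = (∑ s ∈ range (n + 1), ((n + 1).choose (s + 1) : ℚ) * 4 ^ s) * 4 + 1 := by
    rw [hb, Finset.sum_range_succ', Finset.sum_mul]
    simp only [one_pow, pow_zero, one_mul, Nat.choose_zero_right, Nat.cast_one]
    congr 1
    exact Finset.sum_congr rfl fun s _ => by ring
  linarith

theorem a026375_gf_sq :
    (PowerSeries.mk fun n =>
        ∑ d ∈ Finset.range (n + 1), (n.choose d : ℚ) * ((2 * d).choose d : ℚ)) ^ 2 *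
      (1 - 6 * PowerSeries.X + 5 * PowerSeries.X ^ 2) = 1 := by
  have hF : (PowerSeries.mk fun n =>
      ∑ d ∈ Finset.range (n + 1), (n.choose d : ℚ) * ((2 * d).choose d : ℚ)) = F := rfl
  rw [hF]
  have expand : F ^ 2 * (1 - 6 * X + 5 * X ^ 2)
      = F ^ 2 - C (6 : ℚ) * (F ^ 2 * X ^ 1) + C (5 : ℚ) * (F ^ 2 * X ^ 2) := by
    rw [(map_ofNat (C (R := ℚ)) 6).symm, (map_ofNat (C (R := ℚ)) 5).symm]; ring
  rw [expand]
  ext n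
  rw [map_add, map_sub, coeff_C_mul, coeff_C_mul, coeff_mul_X_pow', coeff_mul_X_pow']
  match n with
  | 0 => simp [coeffF2']; norm_num
  | 1 =>
    norm_num [coeffF2', coeff_one]
  | (n + 2) =>
    rw [coeff_one]
    have h1 : (1 : ℕ) ≤ n + 2 := by omega
    have h2 : (2 : ℕ) ≤ n + 2 := by omega
    rw [if_pos h1, if_pos h2, if_neg (by omega), coeffF2', coeffF2', coeffF2',
      show n + 2 - 1 = n + 1 from rfl, show n + 2 - 2 = n from rfl]
    ring_nf
end

section
/- The generating function of the sequence b_n = ∑_{d=0}^n (n-d choose d)(2d choose d) satisfies (∑_{n≥0} b_n x^n)² · (1 - 2x - 3x² + 4x³) = 1 as formal power series over ℚ. -/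
open Finset

private def fq (n d : ℕ) : ℚ := ((n - d).choose d : ℚ) * ((2 * d).choose d : ℚ)

private def gq (n d : ℕ) : ℚ :=
  d * ((2 * d).choose d : ℚ) *
    (3 * ((n - d).choose d : ℚ) - 2 * ((n + 1 - d).choose d : ℚ) - ((n - 1 - d).choose d : ℚ))

private lemma chq (a k : ℕ) : (((a + k).choose k : ℕ) : ℚ)
    = (a + k).factorial / (a.factorial * k.factorial) := by
  have h := Nat.add_choose_mul_factorial_mul_factorial a k
  have h2 : (((a + k).choose k * a.factorial * k.factorial : ℕ) : ℚ) = ((a+k).factorial : ℚ) := by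
    rw [h]
  push_cast at h2
  have ha : (a.factorial : ℚ) ≠ 0 := by positivity
  have hk : (k.factorial : ℚ) ≠ 0 := by positivity
  field_simp
  linarith [h2]

private lemma F_s18 (a : ℕ) : (((a+1).factorial : ℕ) : ℚ) = ((a:ℚ)+1) * (a.factorial : ℚ) := by
  rw [Nat.factorial_succ]; push_cast; ring

/-- raise the top by one -/
private lemma chsucc (a k : ℕ) : (((a+1+k).choose k : ℕ) : ℚ)
    = ((a:ℚ)+1+k)/((a:ℚ)+1) * (((a+k).choose k : ℕ) : ℚ) := by
  rw [chq (a+1) k, chq a k]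
  rw [show a+1+k = (a+k)+1 from by omega, F_s18 (a+k), F_s18 a]
  have h1 : (a.factorial : ℚ) ≠ 0 := by positivity
  have h2 : (k.factorial : ℚ) ≠ 0 := by positivity
  have h3 : ((a+k).factorial : ℚ) ≠ 0 := by positivity
  have h4 : ((a:ℚ)+1) ≠ 0 := by positivity
  push_cast
  field_simp
  ring

/-- raise the bottom by one -/
private lemma chup (a k : ℕ) : (((a+(k+1)).choose (k+1) : ℕ) : ℚ)
    = ((a:ℚ)+1)/((k:ℚ)+1) * (((a+1+k).choose k : ℕ) : ℚ) := by
  rw [chq a (k+1), chq (a+1) k]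
  rw [show a+(k+1) = (a+1)+k from by omega, F_s18 k, F_s18 a]
  have h1 : (a.factorial : ℚ) ≠ 0 := by positivity
  have h2 : (k.factorial : ℚ) ≠ 0 := by positivity
  have h3 : (((a+1)+k).factorial : ℚ) ≠ 0 := by positivity
  push_cast
  field_simp

/-- central binomial step -/
private lemma cbsucc (d : ℕ) : (((2*(d+1)).choose (d+1) : ℕ) : ℚ)
    = (2*(d:ℚ)+2)*(2*(d:ℚ)+1)/(((d:ℚ)+1)*((d:ℚ)+1)) * (((2*d).choose d : ℕ) : ℚ) := by
  rw [show 2*(d+1) = (d+1)+(d+1) from by omega, show 2*d = d+d from by omega]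
  rw [chq (d+1) (d+1), chq d d]
  rw [show (d+1)+(d+1) = ((d+d)+1)+1 from by omega, F_s18 ((d+d)+1), F_s18 (d+d), F_s18 d]
  have h1 : (d.factorial : ℚ) ≠ 0 := by positivity
  have h2 : ((d+d).factorial : ℚ) ≠ 0 := by positivity
  push_cast
  field_simp
  ring

set_option maxHeartbeats 1000000 in
private lemma step_interior (d j m : ℕ) (hm : m = 2*d+1+j) :
    ((m:ℚ)+3) * fq (m+3) d - (2*(m:ℚ)+5) * fq (m+2) d
      - (3*(m:ℚ)+6) * fq (m+1) d + (4*(m:ℚ)+6) * fq m d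
      = gq (m+2) (d+1) - gq (m+2) d := by
  subst hm
  simp only [fq, gq]
  rw [show 2*d+1+j+3 - d = j+4+d from by omega,
      show 2*d+1+j+2 - d = j+3+d from by omega,
      show 2*d+1+j+1 - d = j+2+d from by omega,
      show 2*d+1+j - d = j+1+d from by omega,
      show 2*d+1+j+2-1 - d = j+2+d from by omega,
      show 2*d+1+j+2 - (d+1) = (j+1)+(d+1) from by omega,
      show 2*d+1+j+3 - (d+1) = (j+2)+(d+1) from by omega,
      show 2*d+1+j+2-1 - (d+1) = j+(d+1) from by omega]
  rw [cbsucc d, chup j d, chup (j+1) d, chup (j+2) d]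
  rw [show j+4+d = j+3+1+d from by omega, chsucc (j+3) d,
      show j+3+d = j+2+1+d from by omega, chsucc (j+2) d,
      show j+2+d = j+1+1+d from by omega, chsucc (j+1) d]
  have h1 : ((d:ℚ)+1) ≠ 0 := by positivity
  have h2 : ((j:ℚ)+1) ≠ 0 := by positivity
  have h3 : ((j:ℚ)+2) ≠ 0 := by positivity
  have h4 : ((j:ℚ)+3) ≠ 0 := by positivity
  have h5 : ((j:ℚ)+4) ≠ 0 := by positivity
  push_cast
  field_simp
  ring

private lemma chd1 (d : ℕ) : (((1+d).choose d : ℕ) : ℚ) = (d:ℚ)+1 := by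
  rw [chq 1 d, show (1:ℕ)+d = d+1 from by omega, F_s18 d]
  have h1 : (d.factorial : ℚ) ≠ 0 := by positivity
  simp [Nat.factorial]
  field_simp

private lemma chd2 (d : ℕ) : (((2+d).choose d : ℕ) : ℚ) = ((d:ℚ)+1)*((d:ℚ)+2)/2 := by
  rw [chq 2 d, show (2:ℕ)+d = (d+1)+1 from by omega, F_s18 (d+1), F_s18 d]
  have h1 : (d.factorial : ℚ) ≠ 0 := by positivity
  simp [Nat.factorial]
  field_simp
  ring

private lemma chd3 (d : ℕ) : (((3+d).choose d : ℕ) : ℚ) = ((d:ℚ)+1)*((d:ℚ)+2)*((d:ℚ)+3)/6 := by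
  rw [chq 3 d, show (3:ℕ)+d = ((d+1)+1)+1 from by omega, F_s18 ((d+1)+1), F_s18 (d+1), F_s18 d]
  have h1 : (d.factorial : ℚ) ≠ 0 := by positivity
  simp [Nat.factorial]
  field_simp
  push_cast
  ring

set_option maxHeartbeats 2000000 in
private lemma step (m d : ℕ) :
    ((m:ℚ)+3) * fq (m+3) d - (2*(m:ℚ)+5) * fq (m+2) d
      - (3*(m:ℚ)+6) * fq (m+1) d + (4*(m:ℚ)+6) * fq m d
      = gq (m+2) (d+1) - gq (m+2) d := by
  obtain h | h | h | h | h | h :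
      2*d+1 ≤ m ∨ 2*d = m ∨ 2*d = m+1 ∨ 2*d = m+2 ∨ 2*d = m+3 ∨ m+4 ≤ 2*d := by omega
  · exact step_interior d (m - (2*d+1)) m (by omega)
  · -- m = 2d
    obtain rfl : m = 2*d := by omega
    simp only [fq, gq]
    rw [show 2*d+3 - d = 3+d from by omega,
        show 2*d+2 - d = 2+d from by omega,
        show 2*d+1 - d = 1+d from by omega,
        show 2*d - d = d from by omega,
        show 2*d+2-1 - d = 1+d from by omega,
        show 2*d+2 - (d+1) = d+1 from by omega,
        show 2*d+2+1 - (d+1) = 1+(d+1) from by omega,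
        show 2*d+2-1 - (d+1) = d from by omega]
    rw [chd3 d, chd2 d, chd1 d, chd1 (d+1), Nat.choose_self, Nat.choose_self,
        Nat.choose_eq_zero_of_lt (by omega : d < d+1), cbsucc d]
    push_cast
    have h1 : ((d:ℚ)+1) ≠ 0 := by positivity
    field_simp
    ring
  · -- m = 2e+1, d = e+1
    obtain ⟨e, rfl, rfl⟩ : ∃ e, d = e+1 ∧ m = 2*e+1 := ⟨d-1, by omega, by omega⟩
    simp only [fq, gq]
    rw [show 2*e+1+3 - (e+1) = 2+(e+1) from by omega,
        show 2*e+1+2 - (e+1) = 1+(e+1) from by omega,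
        show 2*e+1+1 - (e+1) = e+1 from by omega,
        show 2*e+1 - (e+1) = e from by omega,
        show 2*e+1+2-1 - (e+1) = e+1 from by omega,
        show 2*e+1+2 - (e+1+1) = e+1 from by omega,
        show 2*e+1+2+1 - (e+1+1) = e+2 from by omega,
        show 2*e+1+2-1 - (e+1+1) = e from by omega]
    rw [chd2 (e+1), chd1 (e+1), Nat.choose_self,
        Nat.choose_eq_zero_of_lt (by omega : e < e+1),
        Nat.choose_eq_zero_of_lt (by omega : e+1 < e+1+1),
        Nat.choose_eq_zero_of_lt (by omega : e < e+1+1),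
        show e+2 = e+1+1 from by omega, Nat.choose_self, cbsucc (e+1)]
    push_cast
    have h1 : ((e:ℚ)+1+1) ≠ 0 := by positivity
    field_simp
    ring
  · -- m = 2e, d = e+1
    obtain ⟨e, rfl, rfl⟩ : ∃ e, d = e+1 ∧ m = 2*e := ⟨d-1, by omega, by omega⟩
    simp only [fq, gq]
    rw [show 2*e+3 - (e+1) = 1+(e+1) from by omega,
        show 2*e+2 - (e+1) = e+1 from by omega,
        show 2*e+1 - (e+1) = e from by omega,
        show 2*e - (e+1) = e-1 from by omega,
        show 2*e+2-1 - (e+1) = e from by omega,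
        show 2*e+2 - (e+1+1) = e from by omega,
        show 2*e+2+1 - (e+1+1) = e+1 from by omega,
        show 2*e+2-1 - (e+1+1) = e-1 from by omega]
    rw [chd1 (e+1), Nat.choose_self,
        Nat.choose_eq_zero_of_lt (by omega : e < e+1),
        Nat.choose_eq_zero_of_lt (by omega : e-1 < e+1),
        Nat.choose_eq_zero_of_lt (by omega : e < e+1+1),
        Nat.choose_eq_zero_of_lt (by omega : e+1 < e+1+1),
        Nat.choose_eq_zero_of_lt (by omega : e-1 < e+1+1)]
    push_cast
    ring
  · -- m = 2e+1, d = e+2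
    obtain ⟨e, rfl, rfl⟩ : ∃ e, d = e+2 ∧ m = 2*e+1 := ⟨d-2, by omega, by omega⟩
    simp only [fq, gq]
    rw [show 2*e+1+3 - (e+2) = e+2 from by omega,
        show 2*e+1+2 - (e+2) = e+1 from by omega,
        show 2*e+1+1 - (e+2) = e from by omega,
        show 2*e+1 - (e+2) = e-1 from by omega,
        show 2*e+1+2-1 - (e+2) = e from by omega,
        show 2*e+1+2 - (e+2+1) = e from by omega,
        show 2*e+1+2+1 - (e+2+1) = e+1 from by omega,
        show 2*e+1+2-1 - (e+2+1) = e-1 from by omega]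
    rw [Nat.choose_self,
        Nat.choose_eq_zero_of_lt (by omega : e+1 < e+2),
        Nat.choose_eq_zero_of_lt (by omega : e < e+2),
        Nat.choose_eq_zero_of_lt (by omega : e-1 < e+2),
        Nat.choose_eq_zero_of_lt (by omega : e < e+2+1),
        Nat.choose_eq_zero_of_lt (by omega : e+1 < e+2+1),
        Nat.choose_eq_zero_of_lt (by omega : e-1 < e+2+1)]
    push_cast
    ring
  · -- all zero
    simp only [fq, gq]
    rw [Nat.choose_eq_zero_of_lt (by omega : m+3-d < d),
        Nat.choose_eq_zero_of_lt (by omega : m+2-d < d),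
        Nat.choose_eq_zero_of_lt (by omega : m+1-d < d),
        Nat.choose_eq_zero_of_lt (by omega : m-d < d),
        Nat.choose_eq_zero_of_lt (by omega : m+2-1-d < d),
        Nat.choose_eq_zero_of_lt (by omega : m+2-(d+1) < d+1),
        Nat.choose_eq_zero_of_lt (by omega : m+2+1-(d+1) < d+1),
        Nat.choose_eq_zero_of_lt (by omega : m+2-1-(d+1) < d+1)]
    push_cast
    ring

private def bq (n : ℕ) : ℚ := ∑ d ∈ Finset.range (n + 1), fq n d

private lemma fq_eq_zero {n d : ℕ} (h : n < 2 * d) : fq n d = 0 := by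
  unfold fq
  rw [Nat.choose_eq_zero_of_lt (by omega)]
  ring

private lemma bq_eq (n N : ℕ) (h : n + 1 ≤ N) : bq n = ∑ d ∈ range N, fq n d := by
  unfold bq
  apply Finset.sum_subset (Finset.range_subset_range.2 h)
  intro d _ hd
  exact fq_eq_zero (by simp at hd; omega)

private lemma brec (m : ℕ) :
    ((m:ℚ)+3) * bq (m+3) - (2*(m:ℚ)+5) * bq (m+2)
      - (3*(m:ℚ)+6) * bq (m+1) + (4*(m:ℚ)+6) * bq m = 0 := by
  rw [bq_eq (m+3) (m+6) (by omega), bq_eq (m+2) (m+6) (by omega),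
      bq_eq (m+1) (m+6) (by omega), bq_eq m (m+6) (by omega),
      Finset.mul_sum, Finset.mul_sum, Finset.mul_sum, Finset.mul_sum,
      ← Finset.sum_sub_distrib, ← Finset.sum_sub_distrib, ← Finset.sum_add_distrib]
  rw [Finset.sum_congr rfl (fun d _ => step m d), Finset.sum_range_sub (gq (m+2))]
  have h0 : gq (m+2) 0 = 0 := by simp [gq]
  have h1 : gq (m+2) (m+6) = 0 := by
    unfold gq
    rw [Nat.choose_eq_zero_of_lt (by omega : m+2-(m+6) < m+6),
        Nat.choose_eq_zero_of_lt (by omega : m+2+1-(m+6) < m+6),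
        Nat.choose_eq_zero_of_lt (by omega : m+2-1-(m+6) < m+6)]
    ring
  rw [h0, h1]
  ring

open PowerSeries

private noncomputable def Bs : ℚ⟦X⟧ := PowerSeries.mk bq
private noncomputable def Pp : ℚ⟦X⟧ := 1 - 2*X - 3*X^2 + 4*X^3

private lemma dPp : d⁄dX ℚ Pp = -2 - 6*X + 12*X^2 := by
  have h2 : d⁄dX ℚ ((X:ℚ⟦X⟧)^2) = 2*X := by
    rw [pow_two, Derivation.leibniz]
    simp [smul_eq_C_mul, map_ofNat]; ring
  have h3 : d⁄dX ℚ ((X:ℚ⟦X⟧)^3) = 3*X^2 := by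
    rw [pow_succ, Derivation.leibniz, h2]
    simp [smul_eq_C_mul, map_ofNat]; ring
  rw [show Pp = 1 - (2:ℚ)•X - (3:ℚ)•X^2 + (4:ℚ)•X^3 from by
    simp [Pp, smul_eq_C_mul, map_ofNat]]
  rw [map_add, map_sub, map_sub, Derivation.map_smul, Derivation.map_smul, Derivation.map_smul]
  simp [h2, h3, smul_eq_C_mul, map_ofNat]
  ring

private lemma bq0 : bq 0 = 1 := by norm_num [bq, fq, Finset.sum_range_succ]
private lemma bq1 : bq 1 = 1 := by norm_num [bq, fq, Finset.sum_range_succ]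
private lemma bq2 : bq 2 = 3 := by norm_num [bq, fq, Finset.sum_range_succ]

private lemma ode : Bs * (-2 - 6*X + 12*X^2) + 2 * Pp * (d⁄dX ℚ Bs) = 0 := by
  have hexp : Bs * (-2 - 6*X + 12*X^2) + 2 * Pp * (d⁄dX ℚ Bs)
      = C (-2 : ℚ) * Bs + C (-6 : ℚ) * (Bs*X^1) + C (12 : ℚ) * (Bs*X^2)
        + C (2 : ℚ) * (d⁄dX ℚ Bs) + C (-4 : ℚ) * ((d⁄dX ℚ Bs)*X^1)
        + C (-6 : ℚ) * ((d⁄dX ℚ Bs)*X^2) + C (8 : ℚ) * ((d⁄dX ℚ Bs)*X^3) := by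
    simp only [map_neg, map_ofNat]
    unfold Pp
    ring
  rw [hexp]
  ext n
  simp only [map_add, coeff_C_mul, coeff_mul_X_pow', coeff_derivative, Bs, coeff_mk, map_zero]
  rcases n with _ | n
  · norm_num [bq0, bq1]
  rcases n with _ | m
  · norm_num [coeff_derivative, coeff_mk, bq0, bq1, bq2]
  rcases m with _ | k
  · have h3 : bq 3 = 5 := by norm_num [bq, fq, Finset.sum_range_succ]
    norm_num [coeff_derivative, coeff_mk, bq0, bq1, bq2, h3]
  · have hb := brec (k+1)
    norm_num [coeff_derivative, coeff_mk]
    simp only [show k+1+1+1-1 = k+2 from by omega, show k+1+1+1-2 = k+1 from by omega,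
        show k+1+1+1-3 = k from by omega, show k+1+1+1 = k+3 from by omega,
        show k+2+1 = k+3 from by omega, show k+1+1 = k+2 from by omega,
        show k+3+1 = k+4 from by omega]
    push_cast
    push_cast at hb
    linarith [hb]

private lemma main : Bs^2 * Pp = 1 := by
  apply derivative.ext
  · rw [Derivation.leibniz, Derivation.leibniz_pow, Derivation.map_one_eq_zero, dPp]
    simp only [smul_eq_mul, nsmul_eq_mul, pow_one, Nat.cast_ofNat]
    linear_combination Bs * ode
  · simp [Bs, Pp, bq0, constantCoeff_mk]

theorem a026569_gf_sq :
    (PowerSeries.mk fun n =>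
        ∑ d ∈ Finset.range (n + 1), ((n - d).choose d : ℚ) * ((2 * d).choose d : ℚ)) ^ 2 *
      (1 - 2 * PowerSeries.X - 3 * PowerSeries.X ^ 2 + 4 * PowerSeries.X ^ 3) = 1 :=
  main
end

section
/- The generating function of the sequence c_n = ∑_{d=0}^n (1/(d+1))(n choose d)(2d choose d) satisfies (∑ c_n x^n)·(1 - x + r(x)) = 2, where r(x) is the unique formal power series with r(0)=1 and r(x)² = 1-6x+5x². -/
open PowerSeries Finset

/-- Vandermonde/hockey-stick convolution. -/
lemma vander (p : ℕ) : ∀ m q : ℕ,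
    ∑ j ∈ range (m + 1), j.choose p * (m - j).choose q = (m + 1).choose (p + q + 1) := by
  intro m
  induction m with
  | zero =>
    intro q
    simp only [zero_add, range_one, sum_singleton, Nat.sub_zero]
    rcases Nat.eq_zero_or_pos (p + q) with h | h
    · obtain ⟨hp, hq⟩ := Nat.add_eq_zero.mp h
      subst hp; subst hq; simp
    · rw [Nat.choose_eq_zero_of_lt (show 1 < p + q + 1 by omega)]
      rcases Nat.eq_zero_or_pos p with hp | hp
      · subst hp
        rw [Nat.choose_eq_zero_of_lt (show 0 < q by omega), mul_zero]
      · rw [Nat.choose_eq_zero_of_lt hp, zero_mul]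
  | succ m ih =>
    intro q
    have hstep : ∀ j ∈ range (m + 1), j.choose p * (m + 1 - j).choose q
        = j.choose p * ((if q = 0 then 0 else (m - j).choose (q - 1)) + (m - j).choose q) := by
      intro j hj
      rw [mem_range] at hj
      rw [show m + 1 - j = (m - j) + 1 by omega]
      rcases q with _ | q'
      · simp
      · simp [Nat.choose_succ_succ]
    rw [sum_range_succ, sum_congr rfl hstep]
    have hsplit : ∑ j ∈ range (m + 1),
          j.choose p * ((if q = 0 then 0 else (m - j).choose (q - 1)) + (m - j).choose q)
        = (∑ j ∈ range (m + 1), j.choose p * (if q = 0 then 0 else (m - j).choose (q - 1)))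
          + ∑ j ∈ range (m + 1), j.choose p * (m - j).choose q := by
      rw [← sum_add_distrib]
      exact sum_congr rfl fun j _ => mul_add _ _ _
    rw [hsplit, ih]
    rcases q with _ | q'
    · have h2 := Nat.choose_succ_succ (m + 1) p
      simp only [Nat.succ_eq_add_one] at h2
      simp [h2]
      omega
    · have hite : ∀ j ∈ range (m + 1),
          (j.choose p * if q' + 1 = 0 then 0 else (m - j).choose (q' + 1 - 1))
          = j.choose p * (m - j).choose q' := by
        intro j hj; simp
      rw [sum_congr rfl hite, ih, Nat.sub_self,
        Nat.choose_eq_zero_of_lt (Nat.succ_pos q'), mul_zero, add_zero]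
      have h2 := Nat.choose_succ_succ (m + 1) (p + q' + 1)
      simp only [Nat.succ_eq_add_one] at h2
      have e1 : p + (q' + 1) + 1 = p + q' + 1 + 1 := by omega
      rw [e1]
      omega

noncomputable def Cat : PowerSeries ℚ := mk fun n => (catalan n : ℚ)

def bfun (n : ℕ) : ℕ := ∑ d ∈ range (n + 1), n.choose d * catalan d

noncomputable def Cser : PowerSeries ℚ := mk fun n => (bfun n : ℚ)

lemma coeff_one_add_X_pow (k n : ℕ) : coeff (R := ℚ) n ((1 + X) ^ k) = (k.choose n : ℚ) := by
  rw [add_comm, add_pow, map_sum]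
  have h : ∀ b ∈ range (k + 1),
      coeff (R := ℚ) n ((X : ℚ⟦X⟧) ^ b * 1 ^ (k - b) * (k.choose b : ℚ⟦X⟧))
      = if n = b then (k.choose b : ℚ) else 0 := by
    intro b _
    rw [one_pow, mul_one, mul_comm, ← map_natCast (C (R := ℚ)) (k.choose b), coeff_C_mul,
      coeff_X_pow, mul_ite, mul_one, mul_zero]
  rw [Finset.sum_congr rfl h, Finset.sum_ite_eq]
  by_cases hn : n ∈ range (k + 1)
  · rw [if_pos hn]
  · rw [if_neg hn, Nat.choose_eq_zero_of_lt (by simpa using hn), Nat.cast_zero]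

lemma factCat : Cat = 1 + X * Cat ^ 2 := by
  ext n
  cases n with
  | zero =>
    simp only [coeff_zero_eq_constantCoeff, map_add, map_mul, constantCoeff_X, zero_mul,
      add_zero, map_one, Cat, constantCoeff_mk]
    norm_num
  | succ n =>
    rw [map_add, coeff_succ_X_mul, pow_two, coeff_mul]
    simp only [Cat, coeff_mk, coeff_one, Nat.succ_ne_zero, if_false, zero_add]
    rw [catalan_succ' n]
    push_cast
    rfl

lemma hb (n : ℕ) : coeff (R := ℚ) n ((1 + X) ^ n * Cat) = (bfun n : ℚ) := by
  rw [coeff_mul, Finset.Nat.sum_antidiagonal_eq_sum_range_succ_mk]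
  simp only [coeff_one_add_X_pow, Cat, coeff_mk]
  rw [bfun, Nat.cast_sum, ← Finset.sum_range_reflect]
  refine Finset.sum_congr rfl fun j hj => ?_
  rw [mem_range] at hj
  have h1 : n + 1 - 1 - j = n - j := by omega
  have h2 : n - (n - j) = j := by omega
  rw [h1, h2, Nat.choose_symm (by omega)]
  push_cast
  ring

lemma sq_to_tri {M : Type*} [AddCommMonoid M] (N : ℕ) (f : ℕ → ℕ → M)
    (hf : ∀ p q, N ≤ p + q → f p q = 0) :
    ∑ p ∈ range N, ∑ q ∈ range N, f p q
      = ∑ s ∈ range N, ∑ p ∈ range (s + 1), f p (s - p) := by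
  have hL : ∑ p ∈ range N, ∑ q ∈ range N, f p q
      = ∑ x ∈ range N ×ˢ range N, f x.1 x.2 := by
    rw [Finset.sum_product]
  have hR : ∑ s ∈ range N, ∑ p ∈ range (s + 1), f p (s - p)
      = ∑ x ∈ (range N).sigma (fun s => range (s + 1)), f x.2 (x.1 - x.2) :=
    Finset.sum_sigma' _ _ _
  rw [hL, hR]
  rw [← Finset.sum_subset
    (Finset.filter_subset (fun x : ℕ × ℕ => x.1 + x.2 < N) (range N ×ˢ range N))
    (fun x hx hx' => hf x.1 x.2 (by
      simp only [Finset.mem_filter, hx, true_and, not_lt] at hx'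
      exact hx'))]
  refine Finset.sum_nbij' (fun x : ℕ × ℕ => (⟨x.1 + x.2, x.1⟩ : Σ _ : ℕ, ℕ))
    (fun y => (y.2, y.1 - y.2)) ?_ ?_ ?_ ?_ ?_
  · intro a ha
    simp only [Finset.mem_filter, Finset.mem_product, mem_range] at ha
    simp only [Finset.mem_sigma, mem_range]
    omega
  · intro b hb
    simp only [Finset.mem_sigma, mem_range] at hb
    simp only [Finset.mem_filter, Finset.mem_product, mem_range]
    omega
  · rintro ⟨a1, a2⟩ _
    show (a1, a1 + a2 - a1) = (a1, a2)
    rw [Nat.add_sub_cancel_left]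
  · rintro ⟨b1, b2⟩ hb
    simp only [Finset.mem_sigma, mem_range] at hb
    show (⟨b2 + (b1 - b2), b2⟩ : Σ _ : ℕ, ℕ) = ⟨b1, b2⟩
    rw [show b2 + (b1 - b2) = b1 from Nat.add_sub_cancel' (by omega)]
  · rintro ⟨a1, a2⟩ _
    show f a1 a2 = f a1 (a1 + a2 - a1)
    rw [Nat.add_sub_cancel_left]

lemma conv_b (m : ℕ) : ∑ j ∈ range (m + 1), bfun j * bfun (m - j)
    = ∑ s ∈ range (m + 1), (m + 1).choose (s + 1)
        * ∑ p ∈ range (s + 1), catalan p * catalan (s - p) := by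
  have hext : ∀ j ∈ range (m + 1), bfun j * bfun (m - j)
      = ∑ p ∈ range (m + 1), ∑ q ∈ range (m + 1),
          j.choose p * catalan p * ((m - j).choose q * catalan q) := by
    intro j hj
    rw [mem_range] at hj
    have h1 : bfun j = ∑ p ∈ range (m + 1), j.choose p * catalan p := by
      rw [bfun]
      refine Finset.sum_subset (by intro x hx; rw [mem_range] at *; omega) ?_
      intro x _ hx
      rw [mem_range, not_lt] at hx
      rw [Nat.choose_eq_zero_of_lt (by omega), zero_mul]
    have h2 : bfun (m - j) = ∑ q ∈ range (m + 1), (m - j).choose q * catalan q := by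
      rw [bfun]
      refine Finset.sum_subset (by intro x hx; rw [mem_range] at *; omega) ?_
      intro x _ hx
      rw [mem_range, not_lt] at hx
      rw [Nat.choose_eq_zero_of_lt (by omega), zero_mul]
    rw [h1, h2, Finset.sum_mul_sum]
  rw [Finset.sum_congr rfl hext]
  rw [Finset.sum_comm]
  have hswap : ∀ p ∈ range (m + 1),
      ∑ j ∈ range (m + 1), ∑ q ∈ range (m + 1),
          j.choose p * catalan p * ((m - j).choose q * catalan q)
      = ∑ q ∈ range (m + 1), catalan p * catalan q * (m + 1).choose (p + q + 1) := by
    intro p _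
    rw [Finset.sum_comm]
    refine Finset.sum_congr rfl fun q _ => ?_
    have : ∑ j ∈ range (m + 1), j.choose p * catalan p * ((m - j).choose q * catalan q)
        = catalan p * catalan q * ∑ j ∈ range (m + 1), j.choose p * (m - j).choose q := by
      rw [Finset.mul_sum]
      exact Finset.sum_congr rfl fun j _ => by ring
    rw [this, vander]
  rw [Finset.sum_congr rfl hswap]
  rw [sq_to_tri (m + 1) (fun p q => catalan p * catalan q * (m + 1).choose (p + q + 1))
    (fun p q h => by show catalan p * catalan q * (m + 1).choose (p + q + 1) = 0; rw [Nat.choose_eq_zero_of_lt (by omega), mul_zero])]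
  refine Finset.sum_congr rfl fun s hs => ?_
  rw [mem_range] at hs
  rw [Finset.mul_sum, Finset.sum_congr rfl (fun p hp => ?_)]
  rw [mem_range] at hp
  rw [show p + (s - p) + 1 = s + 1 by omega]
  ring

lemma hBsq (m : ℕ) : coeff (R := ℚ) m (Cser ^ 2) = coeff (R := ℚ) m ((1 + X) ^ (m + 1) * Cat ^ 2) := by
  have hL : coeff (R := ℚ) m (Cser ^ 2) = ∑ j ∈ range (m + 1), (bfun j : ℚ) * (bfun (m - j) : ℚ) := by
    rw [pow_two, coeff_mul, Finset.Nat.sum_antidiagonal_eq_sum_range_succ_mk]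
    simp [Cser, coeff_mk]
  have hCat2 : ∀ k, coeff (R := ℚ) k (Cat ^ 2)
      = ∑ p ∈ range (k + 1), (catalan p : ℚ) * (catalan (k - p) : ℚ) := by
    intro k
    rw [pow_two, coeff_mul, Finset.Nat.sum_antidiagonal_eq_sum_range_succ_mk]
    simp [Cat, coeff_mk]
  have hR : coeff (R := ℚ) m ((1 + X) ^ (m + 1) * Cat ^ 2)
      = ∑ s ∈ range (m + 1), ((m + 1).choose (s + 1) : ℚ)
          * ∑ p ∈ range (s + 1), (catalan p : ℚ) * (catalan (s - p) : ℚ) := by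
    rw [coeff_mul, Finset.Nat.sum_antidiagonal_eq_sum_range_succ_mk]
    simp only [coeff_one_add_X_pow]
    rw [← Finset.sum_range_reflect]
    refine Finset.sum_congr rfl fun s hs => ?_
    rw [mem_range] at hs
    rw [show m + 1 - 1 - s = m - s by omega, show m - (m - s) = s by omega, hCat2,
      show (m + 1).choose (m - s) = (m + 1).choose (s + 1) by
        rw [show m - s = (m + 1) - (s + 1) by omega, Nat.choose_symm (by omega)]]
  rw [hL, hR]
  have := conv_b m
  have hcast := congrArg (fun x : ℕ => (x : ℚ)) this
  push_cast at hcast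
  convert hcast using 2

lemma coeff_Cser (n : ℕ) : coeff (R := ℚ) n Cser = coeff (R := ℚ) n ((1 + X) ^ n * Cat) := by
  rw [hb]; simp [Cser]

lemma key_s19 (n : ℕ) : coeff (R := ℚ) (n + 2) Cser + coeff (R := ℚ) n (Cser ^ 2)
    = coeff (R := ℚ) (n + 1) Cser + coeff (R := ℚ) (n + 1) (Cser ^ 2) := by
  rw [coeff_Cser, coeff_Cser, hBsq, hBsq]
  have e1 : (1 + X : ℚ⟦X⟧) ^ (n + 2) * Cat
      = (1 + X) ^ (n + 2) + X * ((1 + X) ^ (n + 2) * Cat ^ 2) := by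
    linear_combination ((1 + X : ℚ⟦X⟧) ^ (n + 2)) * factCat
  have e2 : (1 + X : ℚ⟦X⟧) ^ (n + 1) * Cat
      = (1 + X) ^ (n + 1) + X * ((1 + X) ^ (n + 1) * Cat ^ 2) := by
    linear_combination ((1 + X : ℚ⟦X⟧) ^ (n + 1)) * factCat
  rw [e1, e2, map_add, map_add, coeff_succ_X_mul, coeff_succ_X_mul,
    coeff_one_add_X_pow, coeff_one_add_X_pow, Nat.choose_self, Nat.choose_self]
  ring

lemma eqE : Cser = 1 + X * Cser + X * Cser ^ 2 - X ^ 2 * Cser ^ 2 := by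
  have hX2 : ∀ (f : ℚ⟦X⟧) (k : ℕ), coeff (R := ℚ) (k + 2) ((X : ℚ⟦X⟧) ^ 2 * f) = coeff (R := ℚ) k f := by
    intro f k
    rw [pow_two, mul_assoc, show k + 2 = (k + 1) + 1 by ring, coeff_succ_X_mul,
      coeff_succ_X_mul]
  ext n
  match n with
  | 0 =>
    simp only [coeff_zero_eq_constantCoeff, map_add, map_sub, map_mul, map_one, map_pow,
      constantCoeff_X, zero_mul, add_zero, mul_zero, sub_zero, Cser, constantCoeff_mk]
    norm_num [bfun]
  | 1 =>
    rw [show (1 : ℕ) = 0 + 1 from rfl, map_sub, map_add, map_add, coeff_succ_X_mul,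
      coeff_succ_X_mul, coeff_X_pow_mul', if_neg (by omega), coeff_one, if_neg (by omega)]
    simp [Cser, bfun, Finset.sum_range_succ, pow_two, coeff_mul, coeff_zero_eq_constantCoeff]
  | (k + 2) =>
    rw [map_sub, map_add, map_add, coeff_succ_X_mul, coeff_succ_X_mul, hX2, coeff_one,
      if_neg (by omega)]
    have := key_s19 k
    linarith

lemma quad : (1 - X) * Cser - X * (1 - X) * Cser ^ 2 = 1 := by
  linear_combination eqE

theorem a007317_gf (r : PowerSeries ℚ)
    (h0 : PowerSeries.constantCoeff (R := ℚ) r = 1)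
    (hr : r ^ 2 = 1 - 6 * PowerSeries.X + 5 * PowerSeries.X ^ 2) :
    (PowerSeries.mk fun n =>
        ∑ d ∈ Finset.range (n + 1),
          (1 / (d + 1 : ℚ)) * (n.choose d : ℚ) * ((2 * d).choose d : ℚ)) *
      (1 - PowerSeries.X + r) = 2 := by
  have hC : (PowerSeries.mk fun n =>
      ∑ d ∈ Finset.range (n + 1),
        (1 / (d + 1 : ℚ)) * (n.choose d : ℚ) * ((2 * d).choose d : ℚ)) = Cser := by
    ext n
    simp only [coeff_mk, Cser, bfun, Nat.cast_sum, Nat.cast_mul]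
    refine Finset.sum_congr rfl fun d _ => ?_
    have hcb : ((2 * d).choose d : ℚ) = (d + 1 : ℚ) * (catalan d : ℚ) := by
      have := succ_mul_catalan_eq_centralBinom d
      have h2 : d.centralBinom = (2 * d).choose d := rfl
      rw [h2] at this
      rw [← this]
      push_cast
      ring
    rw [hcb]
    have hd : (d : ℚ) + 1 ≠ 0 := by positivity
    field_simp
  rw [hC]
  have hsq : (2 - Cser * (1 - X)) ^ 2 = (Cser * r) ^ 2 := by
    linear_combination (-(Cser ^ 2)) * hr + (-4 : ℚ⟦X⟧) * quad
  have hfac : (2 - Cser * (1 - X) - Cser * r) * (2 - Cser * (1 - X) + Cser * r) = 0 := by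
    linear_combination hsq
  have hne : (2 - Cser * (1 - X) + Cser * r) ≠ 0 := by
    intro h
    have := congrArg (constantCoeff (R := ℚ)) h
    simp only [map_add, map_sub, map_mul, map_one, constantCoeff_X, map_ofNat, h0,
      Cser, constantCoeff_mk] at this
    norm_num [bfun] at this
  have hz : 2 - Cser * (1 - X) - Cser * r = 0 := by
    rcases mul_eq_zero.mp hfac with h | h
    · exact h
    · exact absurd h hne
  linear_combination -hz
end
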